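/- arXiv:0806.2080 — 5 statements merged into one kernel-verified Lean document; each statement's English description precedes it below -/
import Mathlib

section
/- Let D > 0, let v : (0, D) → ℝ be a nondecreasing function, and let b be a positive C¹ function on (0, D). Then v is differentiable almost everywhere, and for 0 < x < y < D one has b(y)v(y) − b(x)v(x) ≥ ∫_x^y (b(r) v'(r) + b'(r) v(r)) dr. -/
open MeasureTheory Set

lemma stieltjes_parts (F : StieltjesFunction ℝ) {x y : ℝ} (hxy : x < y) (c c' : ℝ → ℝ)
    (hcc : Continuous c) (hc' : Continuous c')
    (hftc : ∀ t ∈ Icc x y, c y - c t = ∫ s in t..y, c' s) :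
    ∫ t in Ioc x y, c t ∂F.measure
      = c y * F y - c x * F x - ∫ s in Ioc x y, c' s * F s := by
  have hFxy : F x ≤ F y := F.mono hxy.le
  have hμfin : F.measure (Ioc x y) ≠ ⊤ := by
    rw [F.measure_Ioc]; exact ENNReal.ofReal_ne_top
  haveI : IsFiniteMeasure (F.measure.restrict (Ioc x y)) :=
    ⟨by rwa [Measure.restrict_apply_univ, lt_top_iff_ne_top]⟩
  haveI : IsFiniteMeasure (volume.restrict (Ioc x y)) :=
    ⟨by rw [Measure.restrict_apply_univ]; exact measure_Ioc_lt_top⟩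
  have hM : (F.measure (Ioc x y)).toReal = F y - F x := by
    rw [F.measure_Ioc, ENNReal.toReal_ofReal (by linarith)]
  -- bounds
  obtain ⟨C, hC⟩ : ∃ C, ∀ t ∈ Icc x y, ‖c t‖ ≤ C :=
    isCompact_Icc.exists_bound_of_continuousOn hcc.continuousOn
  obtain ⟨C', hC'⟩ : ∃ C, ∀ t ∈ Icc x y, ‖c' t‖ ≤ C :=
    isCompact_Icc.exists_bound_of_continuousOn hc'.continuousOn
  -- step 1: rewrite c t as c y - inner integral
  have step1 : ∫ t in Ioc x y, c t ∂F.measure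
      = ∫ t in Ioc x y, (c y - ∫ s in Ioc x y, (Ioi t).indicator c' s) ∂F.measure := by
    refine setIntegral_congr_fun measurableSet_Ioc (fun t ht => ?_)
    have h1 : Ioc x y ∩ Ioi t = Ioc t y := by
      ext s; simp only [mem_inter_iff, mem_Ioc, mem_Ioi]
      constructor
      · rintro ⟨⟨_, h2⟩, h3⟩; exact ⟨h3, h2⟩
      · rintro ⟨h3, h2⟩; exact ⟨⟨ht.1.trans h3, h2⟩, h3⟩
    rw [setIntegral_indicator measurableSet_Ioi, h1,
      ← intervalIntegral.integral_of_le ht.2, ← hftc t ⟨ht.1.le, ht.2⟩]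
    ring
  -- integrability of the product function on the product space
  have hprod : Integrable (Function.uncurry fun t s => (Ioi t).indicator c' s)
      ((F.measure.restrict (Ioc x y)).prod (volume.restrict (Ioc x y))) := by
    have hmeas : StronglyMeasurable (Function.uncurry fun t s => (Ioi t).indicator c' s) := by
      have : (Function.uncurry fun t s => (Ioi t).indicator c' s)
          = {p : ℝ × ℝ | p.1 < p.2}.indicator (fun p => c' p.2) := by
        ext p
        by_cases h : p.1 < p.2 <;>
          simp [Function.uncurry, Set.indicator, h, mem_Ioi, mem_setOf_eq]
      rw [this]
      exact (hc'.comp continuous_snd).stronglyMeasurable.indicator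
        (measurableSet_lt measurable_fst measurable_snd)
    refine Integrable.mono' (integrable_const (max C' 0)) hmeas.aestronglyMeasurable ?_
    rw [Measure.prod_restrict]
    filter_upwards [ae_restrict_mem (measurableSet_Ioc.prod measurableSet_Ioc)] with p hp
    rcases hp with ⟨hp1, hp2⟩
    by_cases h : p.1 < p.2
    · simp only [Function.uncurry, indicator_of_mem (mem_Ioi.2 h)]
      exact le_max_of_le_left (hC' p.2 (Ioc_subset_Icc_self hp2))
    · simp only [Function.uncurry, indicator_of_notMem (fun hh => h (mem_Ioi.1 hh))]
      simp [le_max_right]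
  -- Fubini
  have swap : ∫ t in Ioc x y, (∫ s in Ioc x y, (Ioi t).indicator c' s) ∂F.measure
      = ∫ s in Ioc x y, (∫ t in Ioc x y, (Ioi t).indicator c' s ∂F.measure) := by
    exact integral_integral_swap hprod
  -- inner integral after swap
  have inner : ∀ s ∈ Ioc x y, (∫ t in Ioc x y, (Ioi t).indicator c' s ∂F.measure)
      = c' s * (F.measure (Ioo x s)).toReal := by
    intro s hs
    have h1 : ∀ t, (Ioi t).indicator c' s = (Iio s).indicator (fun _ => c' s) t := by
      intro t
      by_cases h : t < s
      · rw [indicator_of_mem (mem_Ioi.2 h), indicator_of_mem (mem_Iio.2 h)]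
      · rw [indicator_of_notMem (fun hh => h (mem_Ioi.1 hh)),
          indicator_of_notMem (fun hh => h (mem_Iio.1 hh))]
    have h2 : Ioc x y ∩ Iio s = Ioo x s := by
      ext t; simp only [mem_inter_iff, mem_Ioc, mem_Iio, mem_Ioo]
      constructor
      · rintro ⟨⟨h3, _⟩, h4⟩; exact ⟨h3, h4⟩
      · rintro ⟨h3, h4⟩; exact ⟨⟨h3, (le_of_lt h4).trans hs.2⟩, h4⟩
    simp_rw [h1]
    rw [setIntegral_indicator measurableSet_Iio, h2, setIntegral_const, smul_eq_mul, mul_comm, measureReal_def]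
  -- a.e. identification of the measure of Ioo
  have haeIoo : ∀ᵐ s ∂(volume.restrict (Ioc x y)),
      c' s * (F.measure (Ioo x s)).toReal = c' s * (F s - F x) := by
    have h1 : ∀ᵐ s ∂volume, Function.leftLim F s = F s :=
      F.countable_leftLim_ne.ae_notMem volume |>.mono (fun s hs => Classical.not_not.1 hs)
    filter_upwards [ae_restrict_of_ae h1, ae_restrict_mem measurableSet_Ioc] with s hs hs'
    rw [F.measure_Ioo, hs, ENNReal.toReal_ofReal (by linarith [F.mono hs'.1.le])]
  -- integrability for final splitting
  have hFb : ∀ s ∈ Ioc x y, ‖(F : ℝ → ℝ) s‖ ≤ max ‖F x‖ ‖F y‖ := by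
    intro s hs
    rw [Real.norm_eq_abs, abs_le]
    constructor
    · have := F.mono hs.1.le
      calc -(max ‖F x‖ ‖F y‖) ≤ -‖F x‖ := by simp [le_max_left]
        _ ≤ F x := neg_abs_le _
        _ ≤ F s := this
    · calc F s ≤ F y := F.mono hs.2
        _ ≤ ‖F y‖ := le_abs_self _
        _ ≤ max ‖F x‖ ‖F y‖ := le_max_right _ _
  have hIF : IntegrableOn (fun s => (F : ℝ → ℝ) s) (Ioc x y) volume := by
    refine Integrable.mono' (integrable_const (max ‖F x‖ ‖F y‖))
      (F.mono.measurable.aestronglyMeasurable) ?_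
    filter_upwards [ae_restrict_mem measurableSet_Ioc] with s hs using hFb s hs
  have hIc'F : IntegrableOn (fun s => c' s * F s) (Ioc x y) volume := by
    refine Integrable.mono' (integrable_const ((max C' 0) * max ‖(F : ℝ → ℝ) x‖ ‖(F : ℝ → ℝ) y‖))
      (hc'.aestronglyMeasurable.mul F.mono.measurable.aestronglyMeasurable) ?_
    filter_upwards [ae_restrict_mem measurableSet_Ioc] with s hs
    rw [norm_mul]
    refine mul_le_mul (le_max_of_le_left (hC' s (Ioc_subset_Icc_self hs))) (hFb s hs)
      (norm_nonneg _) (le_max_right _ _)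
  have hIc' : IntegrableOn c' (Ioc x y) volume := hc'.integrableOn_Ioc
  -- integrability of the inner-integral function
  have hIinner : Integrable (fun t => ∫ s in Ioc x y, (Ioi t).indicator c' s)
      (F.measure.restrict (Ioc x y)) := hprod.integral_prod_left
  have hc'sum : ∫ s in Ioc x y, c' s = c y - c x := by
    rw [← intervalIntegral.integral_of_le hxy.le, ← hftc x ⟨le_rfl, hxy.le⟩]
  calc ∫ t in Ioc x y, c t ∂F.measure
      = ∫ t in Ioc x y, (c y - ∫ s in Ioc x y, (Ioi t).indicator c' s) ∂F.measure := step1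
    _ = (∫ _ in Ioc x y, c y ∂F.measure)
        - ∫ t in Ioc x y, (∫ s in Ioc x y, (Ioi t).indicator c' s) ∂F.measure :=
      integral_sub (integrable_const _) hIinner
    _ = c y * (F y - F x)
        - ∫ s in Ioc x y, (∫ t in Ioc x y, (Ioi t).indicator c' s ∂F.measure) := by
      rw [setIntegral_const, smul_eq_mul, measureReal_def, hM, swap, mul_comm]
    _ = c y * (F y - F x) - ∫ s in Ioc x y, c' s * (F.measure (Ioo x s)).toReal := by
      rw [setIntegral_congr_fun measurableSet_Ioc inner]
    _ = c y * (F y - F x) - ∫ s in Ioc x y, c' s * (F s - F x) := by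
      rw [integral_congr_ae haeIoo]
    _ = c y * (F y - F x) - ((∫ s in Ioc x y, c' s * F s) - F x * (c y - c x)) := by
      have : ∀ s, c' s * ((F : ℝ → ℝ) s - F x) = c' s * F s - F x * c' s := fun s => by ring
      simp_rw [this]
      rw [integral_sub hIc'F (hIc'.const_mul (F x)), MeasureTheory.integral_const_mul, hc'sum]
    _ = c y * F y - c x * F x - ∫ s in Ioc x y, c' s * F s := by ring

/-- if `v` is nondecreasing on `(0, D)` and `b` is a positive `C¹` function
on `(0, D)`, then `v` is differentiable almost everywhere on `(0, D)` and
`b(y)v(y) − b(x)v(x) ≥ ∫_x^y (b v' + b' v)` for `0 < x < y < D`. -/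
theorem stmt1 (D : ℝ) (hD : 0 < D) (v : ℝ → ℝ) (hv : MonotoneOn v (Ioo 0 D))
    (b b' : ℝ → ℝ) (hbpos : ∀ r ∈ Ioo 0 D, 0 < b r)
    (hb : ∀ r ∈ Ioo 0 D, HasDerivAt b (b' r) r)
    (hb'cont : ContinuousOn b' (Ioo 0 D)) :
    (∀ᵐ r ∂(volume.restrict (Ioo 0 D)), DifferentiableAt ℝ v r) ∧
    ∀ x y : ℝ, 0 < x → x < y → y < D →
      b y * v y - b x * v x ≥ ∫ r in x..y, (b r * deriv v r + b' r * v r) := by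
  constructor
  · filter_upwards [hv.ae_differentiableWithinAt measurableSet_Ioo,
      ae_restrict_mem measurableSet_Ioo] with r hdiff hr
    exact hdiff.differentiableAt (Ioo_mem_nhds hr.1 hr.2)
  intro x y hx hxy hyD
  have hIcc : Icc x y ⊆ Ioo 0 D := fun t ht => ⟨hx.trans_le ht.1, lt_of_le_of_lt ht.2 hyD⟩
  have hxy' : x ≤ y := hxy.le
  set proj : ℝ → ℝ := fun t => max x (min t y) with hproj_def
  have hproj_mem : ∀ t, proj t ∈ Icc x y := fun t =>
    ⟨le_max_left _ _, max_le hxy' (min_le_right _ _)⟩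
  have hproj_id : ∀ t ∈ Icc x y, proj t = t := fun t ht => by
    simp only [hproj_def, min_eq_left ht.2, max_eq_right ht.1]
  have hproj_mono : Monotone proj := fun s t hst =>
    max_le_max le_rfl (min_le_min hst le_rfl)
  have hproj_cont : Continuous proj :=
    continuous_const.max ((continuous_id.min continuous_const))
  set g : ℝ → ℝ := fun t => v (proj t) with hg_def
  have hg : Monotone g := fun s t hst =>
    hv (hIcc (hproj_mem s)) (hIcc (hproj_mem t)) (hproj_mono hst)
  have hgv : ∀ t ∈ Icc x y, g t = v t := fun t ht => by rw [hg_def]; simp [hproj_id t ht]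
  set G := hg.stieltjesFunction with hG_def
  set μ := hg.stieltjesFunction.measure with hμ_def
  set rnd := μ.rnDeriv volume with hrnd_def
  -- continuity and positivity of the extended coefficients
  have hbc : ContinuousOn b (Icc x y) := fun t ht =>
    (hb t (hIcc ht)).continuousAt.continuousWithinAt
  set B : ℝ → ℝ := fun t => b (proj t) with hB_def
  set B' : ℝ → ℝ := fun t => b' (proj t) with hB'_def
  have hBcont : Continuous B := hbc.comp_continuous hproj_cont hproj_mem
  have hB'cont : Continuous B' :=
    (hb'cont.mono hIcc).comp_continuous hproj_cont hproj_mem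
  have hBpos : ∀ t, 0 < B t := fun t => hbpos _ (hIcc (hproj_mem t))
  have hBeq : ∀ t ∈ Icc x y, B t = b t := fun t ht => by rw [hB_def]; simp [hproj_id t ht]
  have hB'eq : ∀ t ∈ Icc x y, B' t = b' t := fun t ht => by rw [hB'_def]; simp [hproj_id t ht]
  -- values of the Stieltjes function
  have hGy : (G : ℝ → ℝ) y = v y := by
    rw [hG_def, hg.stieltjesFunction_eq]
    refine le_antisymm ?_ ?_
    · have := hg.rightLim_le (show y < y + 1 by linarith)
      have h2 : g (y + 1) = v y := by
        rw [hg_def]; simp [hproj_def, min_eq_right (show y ≤ y + 1 by linarith),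
          max_eq_right hxy']
      rw [h2] at this; exact this
    · have := hg.le_rightLim (le_refl y)
      rwa [hgv y ⟨hxy', le_rfl⟩] at this
  have hGx : v x ≤ (G : ℝ → ℝ) x := by
    rw [hG_def, hg.stieltjesFunction_eq]
    have := hg.le_rightLim (le_refl x)
    rwa [hgv x ⟨le_rfl, hxy'⟩] at this
  -- measure finiteness
  have hμfin : μ (Ioc x y) ≠ ⊤ := by
    rw [hμ_def, StieltjesFunction.measure_Ioc]; exact ENNReal.ofReal_ne_top
  -- integrand congruence
  have hneqy : ∀ᵐ r ∂(volume : Measure ℝ), r ≠ y :=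
    (countable_singleton y).ae_notMem volume
  have hcongr : (∫ r in x..y, (b r * deriv v r + b' r * v r))
      = ∫ r in Ioc x y, (B r * (rnd r).toReal + B' r * G r) := by
    rw [intervalIntegral.integral_of_le hxy']
    refine setIntegral_congr_ae measurableSet_Ioc ?_
    filter_upwards [hg.ae_hasDerivAt, hg.countable_not_continuousAt.ae_notMem volume,
      hneqy] with r hder hcont hry hr
    have hrIoo : r ∈ Ioo x y := ⟨hr.1, lt_of_le_of_ne hr.2 hry⟩
    have hrIcc : r ∈ Icc x y := Ioo_subset_Icc_self hrIoo
    have hev : v =ᶠ[nhds r] g := by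
      filter_upwards [Ioo_mem_nhds hrIoo.1 hrIoo.2] with t ht
      exact (hgv t (Ioo_subset_Icc_self ht)).symm
    have hderv : HasDerivAt v (rnd r).toReal r := hder.congr_of_eventuallyEq hev
    have hGr : (G : ℝ → ℝ) r = v r := by
      rw [hG_def, hg.stieltjesFunction_eq]
      rw [Classical.not_not, hg.continuousAt_iff_leftLim_eq_rightLim] at hcont
      have h1 : Function.rightLim g r ≤ g r := by
        rw [← hcont]; exact hg.leftLim_le le_rfl
      have h2 := hg.le_rightLim (le_refl r)
      rw [le_antisymm h1 h2, hgv r hrIcc]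
    rw [hderv.deriv, hBeq r hrIcc, hB'eq r hrIcc, hGr]
  -- integrability facts
  obtain ⟨CB, hCB⟩ : ∃ C, ∀ t ∈ Icc x y, ‖b t‖ ≤ C :=
    isCompact_Icc.exists_bound_of_continuousOn hbc
  obtain ⟨CB', hCB'⟩ : ∃ C, ∀ t ∈ Icc x y, ‖b' t‖ ≤ C :=
    isCompact_Icc.exists_bound_of_continuousOn (hb'cont.mono hIcc)
  have hBbd : ∀ t, ‖B t‖ ≤ CB := fun t => hCB _ (hproj_mem t)
  have hB'bd : ∀ t, ‖B' t‖ ≤ CB' := fun t => hCB' _ (hproj_mem t)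
  have Irnd : IntegrableOn (fun t => (rnd t).toReal) (Ioc x y) volume :=
    integrable_toReal_of_lintegral_ne_top
      ((μ.measurable_rnDeriv volume).aemeasurable)
      (Measure.lintegral_rnDeriv_lt_top_of_measure_ne_top volume hμfin).ne
  have I1 : IntegrableOn (fun t => B t * (rnd t).toReal) (Ioc x y) volume :=
    Irnd.bdd_mul hBcont.aestronglyMeasurable (Filter.Eventually.of_forall hBbd)
  have hGb : ∀ s ∈ Ioc x y, ‖(G : ℝ → ℝ) s‖ ≤ max ‖(G : ℝ → ℝ) x‖ ‖(G : ℝ → ℝ) y‖ := by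
    intro s hs
    have h1 : ‖(G : ℝ → ℝ) x‖ ≤ max ‖(G : ℝ → ℝ) x‖ ‖(G : ℝ → ℝ) y‖ := le_max_left _ _
    have h2 : ‖(G : ℝ → ℝ) y‖ ≤ max ‖(G : ℝ → ℝ) x‖ ‖(G : ℝ → ℝ) y‖ := le_max_right _ _
    have h3 := neg_abs_le ((G : ℝ → ℝ) x)
    have h4 := le_abs_self ((G : ℝ → ℝ) y)
    have h5 := G.mono hs.1.le
    have h6 := G.mono hs.2
    simp only [Real.norm_eq_abs] at h1 h2 ⊢
    rw [abs_le]
    constructor <;> linarith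
  have IG : IntegrableOn (fun s => (G : ℝ → ℝ) s) (Ioc x y) volume := by
    refine Integrable.mono' (integrable_const (max ‖(G : ℝ → ℝ) x‖ ‖(G : ℝ → ℝ) y‖))
      (G.mono.measurable.aestronglyMeasurable) ?_
    filter_upwards [ae_restrict_mem measurableSet_Ioc] with s hs using hGb s hs
  have I2 : IntegrableOn (fun t => B' t * G t) (Ioc x y) volume :=
    IG.bdd_mul hB'cont.aestronglyMeasurable (Filter.Eventually.of_forall hB'bd)
  -- the key inequality: pass from the a.c. part to the full Stieltjes measure
  have keyineq : (∫ t in Ioc x y, B t * (rnd t).toReal) ≤ ∫ t in Ioc x y, B t ∂μ := by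
    have h1 : (∫ t in Ioc x y, B t * (rnd t).toReal)
        = (∫⁻ t in Ioc x y, ENNReal.ofReal (B t * (rnd t).toReal)).toReal :=
      integral_eq_lintegral_of_nonneg_ae
        (Filter.Eventually.of_forall fun t => mul_nonneg (hBpos t).le ENNReal.toReal_nonneg)
        I1.aestronglyMeasurable
    have h2 : (∫ t in Ioc x y, B t ∂μ)
        = (∫⁻ t in Ioc x y, ENNReal.ofReal (B t) ∂μ).toReal :=
      integral_eq_lintegral_of_nonneg_ae
        (Filter.Eventually.of_forall fun t => (hBpos t).le)
        hBcont.aestronglyMeasurable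
    have h3 : (∫⁻ t in Ioc x y, ENNReal.ofReal (B t * (rnd t).toReal))
        = ∫⁻ t in Ioc x y, rnd t * ENNReal.ofReal (B t) := by
      refine lintegral_congr_ae ?_
      filter_upwards [ae_restrict_of_ae (Measure.rnDeriv_lt_top μ volume)] with t ht
      rw [ENNReal.ofReal_mul (hBpos t).le, ENNReal.ofReal_toReal ht.ne, mul_comm]
    have h4 : (∫⁻ t in Ioc x y, rnd t * ENNReal.ofReal (B t))
        = ∫⁻ t in Ioc x y, ENNReal.ofReal (B t) ∂(volume.withDensity rnd) := by
      rw [restrict_withDensity measurableSet_Ioc,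
        lintegral_withDensity_eq_lintegral_mul _ (μ.measurable_rnDeriv volume)
          hBcont.measurable.ennreal_ofReal]
      rfl
    have h5 : (∫⁻ t in Ioc x y, ENNReal.ofReal (B t) ∂(volume.withDensity rnd))
        ≤ ∫⁻ t in Ioc x y, ENNReal.ofReal (B t) ∂μ :=
      lintegral_mono' (Measure.restrict_mono subset_rfl
        (Measure.withDensity_rnDeriv_le μ volume)) le_rfl
    have h6 : (∫⁻ t in Ioc x y, ENNReal.ofReal (B t) ∂μ) ≠ ⊤ := by
      refine ne_top_of_le_ne_top ?_
        (lintegral_mono fun t => ENNReal.ofReal_le_ofReal ((le_abs_self _).trans (hBbd t)))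
      rw [lintegral_const, Measure.restrict_apply_univ]
      exact ENNReal.mul_ne_top ENNReal.ofReal_ne_top hμfin
    rw [h1, h2]
    exact ENNReal.toReal_mono h6 (le_trans (le_of_eq (h3.trans h4)) h5)
  -- the integration by parts identity
  have hftc : ∀ t ∈ Icc x y, B y - B t = ∫ s in t..y, B' s := by
    intro t ht
    have hsub : uIcc t y ⊆ Icc x y := by
      rw [uIcc_of_le ht.2]; exact Icc_subset_Icc ht.1 le_rfl
    have h1 : (∫ s in t..y, B' s) = ∫ s in t..y, b' s :=
      intervalIntegral.integral_congr (fun s hs => hB'eq s (hsub hs))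
    have h2 : (∫ s in t..y, b' s) = b y - b t :=
      intervalIntegral.integral_eq_sub_of_hasDerivAt
        (fun s hs => hb s (hIcc (hsub hs)))
        ((hb'cont.mono (hsub.trans hIcc)).intervalIntegrable)
    rw [h1, h2, hBeq y ⟨hxy', le_rfl⟩, hBeq t ht]
  have hparts : (∫ t in Ioc x y, B t ∂μ)
      = B y * G y - B x * G x - ∫ s in Ioc x y, B' s * G s :=
    stieltjes_parts G hxy B B' hBcont hB'cont hftc
  -- conclusion
  rw [ge_iff_le, hcongr]
  have hbx : 0 < b x := hbpos x ⟨hx, hxy.trans hyD⟩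
  calc (∫ r in Ioc x y, (B r * (rnd r).toReal + B' r * G r))
      = (∫ r in Ioc x y, B r * (rnd r).toReal) + ∫ r in Ioc x y, B' r * G r :=
      integral_add I1 I2
    _ ≤ (∫ t in Ioc x y, B t ∂μ) + ∫ r in Ioc x y, B' r * G r := by linarith
    _ = B y * G y - B x * G x := by rw [hparts]; ring
    _ = b y * v y - b x * (G : ℝ → ℝ) x := by
      rw [hBeq y ⟨hxy', le_rfl⟩, hBeq x ⟨le_rfl, hxy'⟩, hGy]
    _ ≤ b y * v y - b x * v x := by nlinarith
end

section
/- Let 0 < x < y, let a > 0, and let f : [x, y] → ℝ and H : [x, y] → [0, ∞) be continuous, with f absolutely continuous and satisfying r·f'(r) ≥ a·f(r) − H(r) for almost every r ∈ (x, y). Then f(x) ≤ (x/y)^a f(y) + x^a ∫_x^y r^{−a−1} H(r) dr. -/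
open MeasureTheory Set

private lemma fubini_aux (x y a : ℝ) (hx : 0 < x) (hxy : x < y) (ha : 0 < a) (f' : ℝ → ℝ)
    (hf' : IntegrableOn f' (Ioc x y)) :
    (∫ r in Ioc x y, a * r ^ (-a - 1) * (∫ s in Ioc x r, f' s)) =
      ∫ s in Ioc x y, (s ^ (-a) - y ^ (-a)) * f' s := by
  set μ : Measure ℝ := volume.restrict (Ioc x y) with hμ
  set S : Set (ℝ × ℝ) := {p : ℝ × ℝ | p.2 ≤ p.1} with hS
  have hSm : MeasurableSet S := measurableSet_le measurable_snd measurable_fst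
  set c : ℝ × ℝ → ℝ := fun p => a * p.1 ^ (-a - 1) * f' p.2 with hc
  set k : ℝ → ℝ → ℝ := fun r s => S.indicator c (r, s) with hk
  have hcontpow : ContinuousOn (fun r : ℝ => a * r ^ (-a - 1)) (Icc x y) := by
    refine continuousOn_const.mul (fun r hr => ?_)
    exact (Real.continuousAt_rpow_const r _ (Or.inl (lt_of_lt_of_le hx hr.1).ne')).continuousWithinAt
  have hpowint : Integrable (fun r : ℝ => a * r ^ (-a - 1)) μ :=
    (hcontpow.integrableOn_Icc).mono_set Ioc_subset_Icc_self
  have hcint : Integrable c (μ.prod μ) := hpowint.mul_prod hf'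
  have hker : Integrable (Function.uncurry k) (μ.prod μ) := by
    have : Function.uncurry k = S.indicator c := by
      funext p; cases p; rfl
    rw [this]
    exact hcint.indicator hSm
  have hL : ∀ r ∈ Ioc x y, (∫ s, k r s ∂μ) = a * r ^ (-a - 1) * ∫ s in Ioc x r, f' s := by
    intro r hr
    have h1 : (fun s => k r s) = fun s => (Iic r).indicator (fun s => a * r ^ (-a - 1) * f' s) s := by
      funext s
      by_cases h : s ≤ r <;>
        simp [hk, hS, hc, Set.indicator_apply, h]
    rw [h1, MeasureTheory.integral_indicator measurableSet_Iic, hμ,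
      Measure.restrict_restrict measurableSet_Iic]
    have h2 : Iic r ∩ Ioc x y = Ioc x r := by
      ext z
      simp only [mem_inter_iff, mem_Iic, mem_Ioc]
      exact ⟨fun ⟨h1', h2', _⟩ => ⟨h2', h1'⟩, fun ⟨h1', h2'⟩ => ⟨h2', h1', h2'.trans hr.2⟩⟩
    rw [h2, MeasureTheory.integral_const_mul]
  have hR : ∀ s ∈ Ioc x y, (∫ r, k r s ∂μ) = (s ^ (-a) - y ^ (-a)) * f' s := by
    intro s hs
    have hspos : 0 < s := hx.trans hs.1
    have h1 : (fun r => k r s) = fun r => (Ici s).indicator (fun r => a * r ^ (-a - 1) * f' s) r := by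
      funext r
      by_cases h : s ≤ r <;>
        simp [hk, hS, hc, Set.indicator_apply, h]
    rw [h1, MeasureTheory.integral_indicator measurableSet_Ici, hμ,
      Measure.restrict_restrict measurableSet_Ici]
    have h2 : Ici s ∩ Ioc x y = Icc s y := by
      ext z
      simp only [mem_inter_iff, mem_Ici, mem_Ioc, mem_Icc]
      exact ⟨fun ⟨h1', _, h3'⟩ => ⟨h1', h3'⟩, fun ⟨h1', h2'⟩ => ⟨h1', hs.1.trans_le h1', h2'⟩⟩
    rw [h2, MeasureTheory.integral_Icc_eq_integral_Ioc,
      ← intervalIntegral.integral_of_le hs.2]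
    have h3 : (fun r : ℝ => a * r ^ (-a - 1) * f' s) = fun r : ℝ => (a * f' s) * r ^ (-a - 1) := by
      funext r; ring
    rw [h3, intervalIntegral.integral_const_mul,
      integral_rpow (Or.inr ⟨by intro h; linarith, by
        rw [uIcc_of_le hs.2]
        rintro ⟨h0, _⟩
        linarith⟩)]
    rw [show -a - 1 + 1 = -a from by ring]
    field_simp [ha.ne']
    ring
  calc (∫ r in Ioc x y, a * r ^ (-a - 1) * (∫ s in Ioc x r, f' s))
      = ∫ r, (∫ s, k r s ∂μ) ∂μ := (setIntegral_congr_fun measurableSet_Ioc hL).symm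
    _ = ∫ s, (∫ r, k r s ∂μ) ∂μ := integral_integral_swap hker
    _ = ∫ s in Ioc x y, (s ^ (-a) - y ^ (-a)) * f' s :=
        setIntegral_congr_fun measurableSet_Ioc hR

/-- Gronwall-type decay estimate. If `f` is absolutely continuous on `[x,y]`
(with derivative `f'` in the sense of the fundamental theorem of calculus), `H` is
continuous and nonnegative, and `r f'(r) ≥ a f(r) − H(r)` a.e. on `(x,y)`, then
`f(x) ≤ (x/y)^a f(y) + x^a ∫_x^y r^{−a−1} H(r) dr`. -/
theorem stmt2 (x y a : ℝ) (hx : 0 < x) (hxy : x < y) (ha : 0 < a)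
    (f f' H : ℝ → ℝ)
    (hHcont : ContinuousOn H (Icc x y)) (hHnn : ∀ r ∈ Icc x y, 0 ≤ H r)
    (hf'int : IntervalIntegrable f' volume x y)
    (hfc : ContinuousOn f (Icc x y))
    (hAC : ∀ t ∈ Icc x y, f t = f x + ∫ s in x..t, f' s)
    (hode : ∀ᵐ r ∂volume, r ∈ Ioo x y → r * f' r ≥ a * f r - H r) :
    f x ≤ (x / y) ^ a * f y + x ^ a * ∫ r in x..y, r ^ (-a - 1) * H r := by
  have hxy' : x ≤ y := hxy.le
  have hy0 : 0 < y := hx.trans hxy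
  set F : ℝ → ℝ := fun t => ∫ s in x..t, f' s with hFdef
  have hf'Ioc : IntegrableOn f' (Ioc x y) :=
    (intervalIntegrable_iff_integrableOn_Ioc_of_le hxy').mp hf'int
  have hFc : ContinuousOn F (Icc x y) := by
    have h := intervalIntegral.continuousOn_primitive_interval (a := x) (b := y) (μ := volume)
      (f := f') (by rwa [uIcc_of_le hxy', integrableOn_Icc_iff_integrableOn_Ioc])
    rwa [uIcc_of_le hxy'] at h
  have hpowc : ∀ c : ℝ, ContinuousOn (fun r : ℝ => r ^ (c : ℝ)) (Icc x y) := fun c r hr =>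
    (Real.continuousAt_rpow_const r c (Or.inl (lt_of_lt_of_le hx hr.1).ne')).continuousWithinAt
  have hnotmem : (0 : ℝ) ∉ uIcc x y := by
    rw [uIcc_of_le hxy']; rintro ⟨h0, _⟩; linarith
  have hne : -a - 1 ≠ -1 := by intro h; linarith
  -- integrabilities
  have hint1 : IntegrableOn (fun r => r ^ (-a) * f' r) (Ioc x y) := by
    have h := hf'int.continuousOn_mul (g := fun r : ℝ => r ^ (-a)) (by
      rw [uIcc_of_le hxy']; exact hpowc (-a))
    exact (intervalIntegrable_iff_integrableOn_Ioc_of_le hxy').mp h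
  have hi1 : IntegrableOn (fun r : ℝ => a * r ^ (-a - 1) * f x) (Ioc x y) :=
    (((continuousOn_const.mul (hpowc (-a - 1))).mul
      continuousOn_const).integrableOn_Icc).mono_set Ioc_subset_Icc_self
  have hi2 : IntegrableOn (fun r : ℝ => a * r ^ (-a - 1) * F r) (Ioc x y) :=
    (((continuousOn_const.mul (hpowc (-a - 1))).mul hFc).integrableOn_Icc).mono_set
      Ioc_subset_Icc_self
  have hi3 : IntegrableOn (fun r : ℝ => r ^ (-a - 1) * H r) (Ioc x y) :=
    (((hpowc (-a - 1)).mul hHcont).integrableOn_Icc).mono_set Ioc_subset_Icc_self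
  set φ : ℝ → ℝ := fun r => a * r ^ (-a - 1) * (f x + F r) - r ^ (-a - 1) * H r with hφdef
  have hφint : IntegrableOn φ (Ioc x y) :=
    (((continuousOn_const.mul (hpowc (-a - 1))).mul
      (continuousOn_const.add hFc)).sub ((hpowc (-a - 1)).mul hHcont)).integrableOn_Icc.mono_set
      Ioc_subset_Icc_self
  -- a.e. inequality
  have hae : ∀ᵐ r ∂volume, r ∈ Ioc x y → φ r ≤ r ^ (-a) * f' r := by
    have hy : {y}ᶜ ∈ ae volume := compl_mem_ae_iff.mpr (measure_singleton y)
    filter_upwards [hode, hy] with r h1 h2 hr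
    have hro : r ∈ Ioo x y := ⟨hr.1, lt_of_le_of_ne hr.2 h2⟩
    have hineq := h1 hro
    have hrpos : 0 < r := hx.trans hr.1
    have hfr : f r = f x + F r := hAC r ⟨hr.1.le, hr.2⟩
    have hpow : r ^ (-a - 1) * r = r ^ (-a) := by
      have h := Real.rpow_add hrpos (-a - 1) 1
      rw [Real.rpow_one, show -a - 1 + 1 = -a from by ring] at h
      linarith
    have hp2 : (0 : ℝ) ≤ r ^ (-a - 1) := (Real.rpow_pos_of_pos hrpos _).le
    have hstep : r ^ (-a - 1) * (a * f r - H r) ≤ r ^ (-a - 1) * (r * f' r) :=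
      mul_le_mul_of_nonneg_left hineq hp2
    calc φ r = r ^ (-a - 1) * (a * f r - H r) := by rw [hφdef]; dsimp only; rw [← hfr]; ring
      _ ≤ r ^ (-a - 1) * (r * f' r) := hstep
      _ = r ^ (-a) * f' r := by rw [← mul_assoc, hpow]
  have hmono : (∫ r in Ioc x y, φ r) ≤ ∫ r in Ioc x y, r ^ (-a) * f' r :=
    setIntegral_mono_on_ae hφint hint1 measurableSet_Ioc hae
  -- splitting the left integral
  have hsplit : (∫ r in Ioc x y, φ r) =
      ((∫ r in Ioc x y, a * r ^ (-a - 1) * f x) + ∫ r in Ioc x y, a * r ^ (-a - 1) * F r) -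
        ∫ r in Ioc x y, r ^ (-a - 1) * H r := by
    have hi12 : IntegrableOn (fun r : ℝ => a * r ^ (-a - 1) * f x + a * r ^ (-a - 1) * F r)
        (Ioc x y) :=
      ((((continuousOn_const.mul (hpowc (-a - 1))).mul continuousOn_const).add
        ((continuousOn_const.mul (hpowc (-a - 1))).mul hFc)).integrableOn_Icc).mono_set
        Ioc_subset_Icc_self
    rw [show (∫ r in Ioc x y, φ r) = ∫ r in Ioc x y,
        ((a * r ^ (-a - 1) * f x + a * r ^ (-a - 1) * F r) - r ^ (-a - 1) * H r) from
      setIntegral_congr_fun measurableSet_Ioc (fun r _ => by show a * r ^ (-a - 1) * (f x + F r) - r ^ (-a - 1) * H r = _; ring),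
      integral_sub hi12 hi3, integral_add hi1 hi2]
  have hA : (∫ r in Ioc x y, a * r ^ (-a - 1) * f x) = f x * (x ^ (-a) - y ^ (-a)) := by
    rw [← intervalIntegral.integral_of_le hxy',
      show (fun r : ℝ => a * r ^ (-a - 1) * f x) = fun r : ℝ => (a * f x) * r ^ (-a - 1) from
        funext fun r => by ring,
      intervalIntegral.integral_const_mul, integral_rpow (Or.inr ⟨hne, hnotmem⟩),
      show -a - 1 + 1 = -a from by ring]
    field_simp [ha.ne']
    ring
  have hB : (∫ r in Ioc x y, a * r ^ (-a - 1) * F r) =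
      ∫ s in Ioc x y, (s ^ (-a) - y ^ (-a)) * f' s := by
    rw [← fubini_aux x y a hx hxy ha f' hf'Ioc]
    exact setIntegral_congr_fun measurableSet_Ioc (fun r hr => by
      rw [show F r = ∫ s in Ioc x r, f' s from intervalIntegral.integral_of_le hr.1.le])
  have hBsplit : (∫ s in Ioc x y, (s ^ (-a) - y ^ (-a)) * f' s) =
      (∫ s in Ioc x y, s ^ (-a) * f' s) - y ^ (-a) * ∫ s in Ioc x y, f' s := by
    rw [← integral_const_mul, ← integral_sub hint1 (hf'Ioc.const_mul _)]
    exact setIntegral_congr_fun measurableSet_Ioc (fun s _ => by ring)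
  have hIy : (∫ s in Ioc x y, f' s) = F y := (intervalIntegral.integral_of_le hxy').symm
  have hfy : F y = f y - f x := by
    have h := hAC y ⟨hxy', le_refl y⟩
    linarith
  have hkey : f x * x ^ (-a) ≤ y ^ (-a) * f y + ∫ r in Ioc x y, r ^ (-a - 1) * H r := by
    rw [hsplit, hA, hB, hBsplit, hIy, hfy] at hmono
    nlinarith [hmono]
  have hxa : (0 : ℝ) < x ^ a := Real.rpow_pos_of_pos hx a
  have h1 := mul_le_mul_of_nonneg_left hkey hxa.le
  have e1 : x ^ a * (f x * x ^ (-a)) = f x := by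
    rw [mul_comm (f x), ← mul_assoc, ← Real.rpow_add hx]
    norm_num
  have e2 : x ^ a * (y ^ (-a) * f y + ∫ r in Ioc x y, r ^ (-a - 1) * H r) =
      (x / y) ^ a * f y + x ^ a * ∫ r in Ioc x y, r ^ (-a - 1) * H r := by
    rw [mul_add, ← mul_assoc, Real.rpow_neg hy0.le, Real.div_rpow hx.le hy0.le, div_eq_mul_inv]
  rw [e1, e2] at h1
  rwa [intervalIntegral.integral_of_le hxy']
end

section
/- Let a > 0, b > 0, A > 0 and 0 < x < y < A/3. Then x^a ∫_x^y r^{−a−1} (log(A/(2r)))^{−b} dr ≤ C ( (x/A)^{a/2} + (log(A/(2x)))^{−b} ), where C is a constant depending only on a and b. More precisely, splitting the interval of integration into I₁ = { r ∈ (x,y) : log(A/(2r)) ≥ (1/2) log(A/(2x)) } and I₂ = (x,y) \ I₁, one has ∫_{I₁} r^{−a−1}(log(A/(2r)))^{−b} dr ≤ 2^b a^{−1} x^{−a} (log(A/(2x)))^{−b} and ∫_{I₂} r^{−a−1}(log(A/(2r)))^{−b} dr ≤ C' a^{−1} (A x/2)^{−a/2}. -/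
open MeasureTheory Set

lemma key_lemma (a K c : ℝ) (ha : 0 < a) (hc : 0 < c) (hK : 0 ≤ K) {s : Set ℝ}
    (hs : MeasurableSet s) (hsub : s ⊆ Ioi c) {f : ℝ → ℝ}
    (hfi : IntegrableOn f s) (hbound : ∀ r ∈ s, f r ≤ K * r ^ (-a - 1)) :
    ∫ r in s, f r ≤ K * (a⁻¹ * c ^ (-a)) := by
  have hlt : (-a - 1 : ℝ) < -1 := by linarith
  have hgint : IntegrableOn (fun r : ℝ => K * r ^ (-a - 1)) (Ioi c) :=
    (integrableOn_Ioi_rpow_of_lt hlt hc).const_mul K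
  calc ∫ r in s, f r ≤ ∫ r in s, K * r ^ (-a - 1) :=
        setIntegral_mono_on hfi (hgint.mono_set hsub) hs hbound
    _ ≤ ∫ r in Ioi c, K * r ^ (-a - 1) := by
        apply setIntegral_mono_set hgint
        · filter_upwards [ae_restrict_mem measurableSet_Ioi] with r hr
          have : (0:ℝ) < r := hc.trans hr
          positivity
        · exact HasSubset.Subset.eventuallyLE hsub
    _ = K * ∫ r in Ioi c, r ^ (-a - 1) := MeasureTheory.integral_const_mul K _
    _ = K * (a⁻¹ * c ^ (-a)) := by
        rw [integral_Ioi_rpow_of_lt hlt hc]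
        have : (-a - 1 + 1 : ℝ) = -a := by ring
        rw [this]
        field_simp

lemma aux_div (A r : ℝ) (hA : 0 < A) (hr : 0 < r) (h3 : 3 * r < A) :
    (3:ℝ)/2 < A / (2 * r) := by
  rw [div_lt_div_iff₀ (by norm_num) (by positivity)]
  nlinarith

/-- decay estimate with a logarithmic gauge. For `a, b > 0`, `A > 0`,
`0 < x < y < A/3`, one has
`x^a ∫_x^y r^{−a−1} (log(A/(2r)))^{−b} dr ≤ C ((x/A)^{a/2} + (log(A/(2x)))^{−b})`
with `C = C(a,b)`; more precisely, splitting `(x,y)` into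
`I₁ = {r : log(A/(2r)) ≥ (1/2) log(A/(2x))}` and `I₂ = (x,y) \ I₁`, one has
`∫_{I₁} ≤ 2^b a⁻¹ x^{−a} (log(A/(2x)))^{−b}` and `∫_{I₂} ≤ C' a⁻¹ (Ax/2)^{−a/2}`
with `C' = C'(b)`. -/
theorem stmt4 (b : ℝ) (hb : 0 < b) :
    ∃ C' : ℝ, 0 < C' ∧ ∀ a : ℝ, 0 < a → ∃ C : ℝ, 0 < C ∧
      ∀ A x y : ℝ, 0 < A → 0 < x → x < y → y < A / 3 →
        (x ^ a * ∫ r in x..y, r ^ (-a - 1) * (Real.log (A / (2 * r))) ^ (-b)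
            ≤ C * ((x / A) ^ (a / 2) + (Real.log (A / (2 * x))) ^ (-b))) ∧
        ((∫ r in {r : ℝ | r ∈ Ioo x y ∧
              (1 / 2) * Real.log (A / (2 * x)) ≤ Real.log (A / (2 * r))},
              r ^ (-a - 1) * (Real.log (A / (2 * r))) ^ (-b))
            ≤ 2 ^ b * a⁻¹ * x ^ (-a) * (Real.log (A / (2 * x))) ^ (-b)) ∧
        ((∫ r in {r : ℝ | r ∈ Ioo x y ∧
              Real.log (A / (2 * r)) < (1 / 2) * Real.log (A / (2 * x))},
              r ^ (-a - 1) * (Real.log (A / (2 * r))) ^ (-b))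
            ≤ C' * a⁻¹ * (A * x / 2) ^ (-a / 2)) := by
  have hlog32 : 0 < Real.log (3/2) := Real.log_pos (by norm_num)
  refine ⟨(Real.log (3/2)) ^ (-b), by positivity, fun a ha => ?_⟩
  refine ⟨2 ^ b * a⁻¹ + (Real.log (3/2)) ^ (-b) * a⁻¹ * 2 ^ (a/2), by positivity,
    fun A x y hA hx hxy hyA => ?_⟩
  set L := Real.log (A / (2 * x)) with hLdef
  set f : ℝ → ℝ := fun r => r ^ (-a - 1) * (Real.log (A / (2 * r))) ^ (-b) with hfdef
  set I₁ : Set ℝ := {r : ℝ | r ∈ Ioo x y ∧ (1/2) * L ≤ Real.log (A / (2 * r))} with hI1def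
  set I₂ : Set ℝ := {r : ℝ | r ∈ Ioo x y ∧ Real.log (A / (2 * r)) < (1/2) * L} with hI2def
  have hy0 : 0 < y := hx.trans hxy
  -- on (x,y], A/(2r) > 3/2
  have hfrac : ∀ r : ℝ, x ≤ r → r ≤ y → (3:ℝ)/2 < A / (2 * r) := fun r h1 h2 =>
    aux_div A r hA (hx.trans_le h1) (by nlinarith)
  have hL32 : Real.log (3/2) < L := Real.log_lt_log (by norm_num) (hfrac x le_rfl hxy.le)
  have hL : 0 < L := hlog32.trans hL32
  -- log positivity on the interval
  have hlogpos : ∀ r : ℝ, x ≤ r → r ≤ y → Real.log (3/2) < Real.log (A / (2 * r)) :=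
    fun r h1 h2 => Real.log_lt_log (by norm_num) (hfrac r h1 h2)
  -- continuity and integrability
  have hcont : ContinuousOn f (Icc x y) := by
    intro r hr
    have hr0 : 0 < r := hx.trans_le hr.1
    have hpos : 0 < A / (2 * r) := lt_trans (by norm_num) (hfrac r hr.1 hr.2)
    have h1 : ContinuousAt (fun r : ℝ => A / (2 * r)) r :=
      ContinuousAt.div continuousAt_const (by fun_prop) (by positivity)
    have h2 : ContinuousAt (fun r : ℝ => Real.log (A / (2 * r))) r := h1.log hpos.ne'
    have h3 : ContinuousAt (fun r : ℝ => (Real.log (A / (2 * r))) ^ (-b)) r :=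
      h2.rpow_const (Or.inl (hlog32.trans (hlogpos r hr.1 hr.2)).ne')
    exact (((Real.continuousAt_rpow_const r (-a-1) (Or.inl hr0.ne')).mul h3)).continuousWithinAt
  have hint : IntegrableOn f (Ioo x y) :=
    (hcont.integrableOn_Icc).mono_set Ioo_subset_Icc_self
  -- measurability
  have hmg : Measurable (fun r : ℝ => Real.log (A / (2 * r))) :=
    Real.measurable_log.comp (measurable_const.div (measurable_const.mul measurable_id))
  have hm1 : MeasurableSet I₁ := by
    have : I₁ = Ioo x y ∩ {r : ℝ | (1/2) * L ≤ Real.log (A / (2 * r))} := rfl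
    rw [this]
    exact measurableSet_Ioo.inter (measurableSet_le measurable_const hmg)
  have hm2 : MeasurableSet I₂ := by
    have : I₂ = Ioo x y ∩ {r : ℝ | Real.log (A / (2 * r)) < (1/2) * L} := rfl
    rw [this]
    exact measurableSet_Ioo.inter (measurableSet_lt hmg measurable_const)
  have hsub1 : I₁ ⊆ Ioo x y := fun r hr => hr.1
  have hsub2 : I₂ ⊆ Ioo x y := fun r hr => hr.1
  -- bound on I₁
  have hb1 : (∫ r in I₁, f r) ≤ 2 ^ b * a⁻¹ * x ^ (-a) * L ^ (-b) := by
    have : (∫ r in I₁, f r) ≤ (2 ^ b * L ^ (-b)) * (a⁻¹ * x ^ (-a)) := by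
      apply key_lemma a _ x ha hx (by positivity) hm1
        (fun r hr => (hsub1 hr).1) (hint.mono_set hsub1)
      intro r hr
      have hr0 : 0 < r := hx.trans (hsub1 hr).1
      have hlogr : (Real.log (A / (2 * r))) ^ (-b) ≤ (L/2) ^ (-b) :=
        Real.rpow_le_rpow_of_nonpos (by linarith) (by linarith [hr.2]) (by linarith)
      have heq : (L/2 : ℝ) ^ (-b) = 2 ^ b * L ^ (-b) := by
        rw [Real.div_rpow hL.le (by norm_num), Real.rpow_neg (by norm_num : (0:ℝ) ≤ 2)]
        field_simp
      calc f r ≤ r ^ (-a - 1) * (L/2) ^ (-b) :=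
            mul_le_mul_of_nonneg_left hlogr (by positivity)
        _ = 2 ^ b * L ^ (-b) * r ^ (-a - 1) := by rw [heq]; ring
    calc (∫ r in I₁, f r) ≤ (2 ^ b * L ^ (-b)) * (a⁻¹ * x ^ (-a)) := this
      _ = 2 ^ b * a⁻¹ * x ^ (-a) * L ^ (-b) := by ring
  -- bound on I₂
  have hm0 : 0 < Real.sqrt (A * x / 2) := Real.sqrt_pos.2 (by positivity)
  have hsubm : I₂ ⊆ Ioi (Real.sqrt (A * x / 2)) := by
    intro r hr
    have hr0 : 0 < r := hx.trans hr.1.1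
    have hpos : 0 < A / (2 * r) := lt_trans (by norm_num) (hfrac r hr.1.1.le hr.1.2.le)
    have hu : 0 < A / (2 * x) := by positivity
    have h1 : A / (2 * r) < (A / (2 * x)) ^ (1/2 : ℝ) := by
      rw [Real.rpow_def_of_pos hu]
      calc A / (2 * r) = Real.exp (Real.log (A / (2 * r))) := (Real.exp_log hpos).symm
        _ < Real.exp (1/2 * L) := Real.exp_lt_exp.2 hr.2
        _ = Real.exp (Real.log (A / (2 * x)) * (1/2)) := by congr 1; rw [hLdef]; ring
    have hsq : (A / (2 * r)) * (A / (2 * r)) < A / (2 * x) := by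
      have h2 : (A / (2 * r)) * (A / (2 * r)) <
          (A / (2 * x)) ^ (1/2 : ℝ) * (A / (2 * x)) ^ (1/2 : ℝ) :=
        mul_lt_mul'' h1 h1 hpos.le hpos.le
      rwa [← Real.rpow_add hu, show (1/2 : ℝ) + 1/2 = 1 by norm_num, Real.rpow_one] at h2
    rw [mem_Ioi, show r = Real.sqrt (r^2) from (Real.sqrt_sq hr0.le).symm]
    apply Real.sqrt_lt_sqrt (by positivity)
    rw [div_mul_div_comm, div_lt_div_iff₀ (by positivity) (by positivity)] at hsq
    nlinarith
  have hb2 : (∫ r in I₂, f r) ≤ (Real.log (3/2)) ^ (-b) * a⁻¹ * (A * x / 2) ^ (-a/2) := by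
    have hmrpow : (Real.sqrt (A * x / 2)) ^ (-a) = (A * x / 2) ^ (-a/2) := by
      rw [Real.sqrt_eq_rpow, ← Real.rpow_mul (by positivity)]
      congr 1; ring
    have : (∫ r in I₂, f r) ≤ (Real.log (3/2)) ^ (-b) * (a⁻¹ * (Real.sqrt (A * x / 2)) ^ (-a)) := by
      apply key_lemma a _ _ ha hm0 (by positivity) hm2 hsubm (hint.mono_set hsub2)
      intro r hr
      have hr0 : 0 < r := hx.trans hr.1.1
      have hlogr : (Real.log (A / (2 * r))) ^ (-b) ≤ (Real.log (3/2)) ^ (-b) :=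
        Real.rpow_le_rpow_of_nonpos hlog32 (hlogpos r hr.1.1.le hr.1.2.le).le (by linarith)
      calc f r ≤ r ^ (-a - 1) * (Real.log (3/2)) ^ (-b) :=
            mul_le_mul_of_nonneg_left hlogr (by positivity)
        _ = (Real.log (3/2)) ^ (-b) * r ^ (-a - 1) := mul_comm _ _
    rw [hmrpow] at this
    calc (∫ r in I₂, f r) ≤ (Real.log (3/2)) ^ (-b) * (a⁻¹ * (A * x / 2) ^ (-a/2)) := this
      _ = (Real.log (3/2)) ^ (-b) * a⁻¹ * (A * x / 2) ^ (-a/2) := by ring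
  refine ⟨?_, hb1, hb2⟩
  -- main bound
  have hsplit : (∫ r in x..y, f r) = (∫ r in I₁, f r) + (∫ r in I₂, f r) := by
    rw [intervalIntegral.integral_of_le hxy.le, MeasureTheory.integral_Ioc_eq_integral_Ioo]
    have hunion : Ioo x y = I₁ ∪ I₂ := by
      ext r
      simp only [hI1def, hI2def, mem_union, mem_setOf_eq]
      constructor
      · intro h; rcases le_or_gt ((1/2) * L) (Real.log (A / (2 * r))) with h' | h'
        · exact Or.inl ⟨h, h'⟩
        · exact Or.inr ⟨h, h'⟩
      · rintro (⟨h, _⟩ | ⟨h, _⟩) <;> exact h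
    have hdisj : Disjoint I₁ I₂ := by
      rw [Set.disjoint_left]
      rintro r ⟨_, h1⟩ ⟨_, h2⟩
      exact absurd h1 (not_le.2 h2)
    rw [hunion, MeasureTheory.setIntegral_union hdisj hm2 (hint.mono_set hsub1) (hint.mono_set hsub2)]
  have hxann : (0:ℝ) ≤ x ^ a := by positivity
  have hxa1 : x ^ a * x ^ (-a) = 1 := by
    rw [← Real.rpow_add hx]; simp
  have hxa2 : x ^ a * (A * x / 2) ^ (-a/2) = 2 ^ (a/2) * (x/A) ^ (a/2) := by
    have e1 : x ^ a = (x ^ (2:ℝ)) ^ (a/2) := by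
      rw [← Real.rpow_mul hx.le]; congr 1; ring
    have e2 : (A * x / 2 : ℝ) ^ (-a/2) = ((A * x / 2) ^ (a/2))⁻¹ := by
      rw [show (-a/2 : ℝ) = -(a/2) by ring, Real.rpow_neg (by positivity)]
    rw [e1, e2, ← div_eq_mul_inv, ← Real.div_rpow (by positivity : (0:ℝ) ≤ x ^ (2:ℝ)) (by positivity : (0:ℝ) ≤ A * x / 2) (a/2),
      show (x ^ (2:ℝ) / (A * x / 2)) = 2 * (x / A) by
        rw [Real.rpow_two]; field_simp,
      Real.mul_rpow (by norm_num) (by positivity)]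
  have hP : (0:ℝ) ≤ (x/A) ^ (a/2) := by positivity
  have hQ : (0:ℝ) ≤ L ^ (-b) := by positivity
  rw [hsplit, mul_add]
  have t1 : x ^ a * (∫ r in I₁, f r) ≤ 2 ^ b * a⁻¹ * L ^ (-b) := by
    calc x ^ a * (∫ r in I₁, f r) ≤ x ^ a * (2 ^ b * a⁻¹ * x ^ (-a) * L ^ (-b)) :=
          mul_le_mul_of_nonneg_left hb1 hxann
      _ = (x ^ a * x ^ (-a)) * (2 ^ b * a⁻¹ * L ^ (-b)) := by ring
      _ = 2 ^ b * a⁻¹ * L ^ (-b) := by rw [hxa1]; ring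
  have t2 : x ^ a * (∫ r in I₂, f r) ≤
      (Real.log (3/2)) ^ (-b) * a⁻¹ * 2 ^ (a/2) * (x/A) ^ (a/2) := by
    calc x ^ a * (∫ r in I₂, f r)
        ≤ x ^ a * ((Real.log (3/2)) ^ (-b) * a⁻¹ * (A * x / 2) ^ (-a/2)) :=
          mul_le_mul_of_nonneg_left hb2 hxann
      _ = (Real.log (3/2)) ^ (-b) * a⁻¹ * (x ^ a * (A * x / 2) ^ (-a/2)) := by ring
      _ = (Real.log (3/2)) ^ (-b) * a⁻¹ * (2 ^ (a/2) * (x/A) ^ (a/2)) := by rw [hxa2]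
      _ = (Real.log (3/2)) ^ (-b) * a⁻¹ * 2 ^ (a/2) * (x/A) ^ (a/2) := by ring
  have hc1 : (0:ℝ) ≤ 2 ^ b * a⁻¹ := by positivity
  have hc2 : (0:ℝ) ≤ (Real.log (3/2)) ^ (-b) * a⁻¹ * 2 ^ (a/2) := by positivity
  nlinarith [t1, t2]
end

section
/- Let l > 0 and let v : [0, l] → ℝ^m be Lipschitz with v(0) = v(l) = 0. Then ∫_0^l |v'(t)|² dt ≥ (π/l)² ∫_0^l |v(t)|² dt. -/
open MeasureTheory Set
open intervalIntegral Filter Topology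

noncomputable def ctW (c t : ℝ) : ℝ := Real.cos (c * t) / Real.sin (c * t)

lemma lip_ftc {K : NNReal} {f : ℝ → ℝ} (hf : LipschitzWith K f) {a b : ℝ} (hab : a ≤ b) :
    ∫ x in a..b, deriv f x = f b - f a := by
  have hfc : Continuous f := hf.continuous
  set h : ℕ → ℝ := fun n => 1 / (n + 1) with hh
  have hpos : ∀ n, 0 < h n := fun n => by positivity
  have hto : Tendsto h atTop (𝓝 0) := tendsto_one_div_add_atTop_nhds_zero_nat
  set q : ℕ → ℝ → ℝ := fun n x => (f (x + h n) - f x) / h n with hq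
  have hmeas : ∀ n, AEStronglyMeasurable (q n) (volume.restrict (Set.Ioc a b)) := fun n =>
    (((hfc.comp (continuous_id.add continuous_const)).sub hfc).div_const _).aestronglyMeasurable
  have hbound : ∀ n, ∀ᵐ x ∂(volume.restrict (Set.Ioc a b)), ‖q n x‖ ≤ (K : ℝ) := by
    intro n
    refine ae_of_all _ fun x => ?_
    have hd : dist (f (x + h n)) (f x) ≤ (K : ℝ) * dist (x + h n) x := hf.dist_le_mul _ _
    rw [Real.dist_eq, Real.dist_eq, add_sub_cancel_left, abs_of_pos (hpos n)] at hd
    have : ‖q n x‖ = |f (x + h n) - f x| / h n := by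
      rw [hq]; simp [Real.norm_eq_abs, abs_div, abs_of_pos (hpos n)]
    rw [this, div_le_iff₀ (hpos n)]
    linarith
  have hlim : ∀ᵐ x ∂(volume.restrict (Set.Ioc a b)),
      Tendsto (fun n => q n x) atTop (𝓝 (deriv f x)) := by
    refine ae_restrict_of_ae ?_
    filter_upwards [hf.ae_differentiableAt_of_real (μ := volume)] with x hx
    have hd : HasDerivAt f (deriv f x) x := hx.hasDerivAt
    rw [hasDerivAt_iff_tendsto_slope] at hd
    have hxs : Tendsto (fun n => x + h n) atTop (𝓝[≠] x) := by
      apply tendsto_nhdsWithin_of_tendsto_nhds_of_eventually_within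
      · simpa using tendsto_const_nhds.add hto
      · exact Eventually.of_forall fun n => by
          simp only [mem_compl_iff, mem_singleton_iff]
          exact by nlinarith [hpos n]
    refine (hd.comp hxs).congr fun n => ?_
    simp [Function.comp, slope_def_field, hq]
  have hDCT := MeasureTheory.tendsto_integral_of_dominated_convergence
      (fun _ => (K : ℝ)) hmeas (integrable_const _) hbound hlim
  -- compute the integral of q n explicitly
  have hint : ∀ c d : ℝ, IntervalIntegrable f volume c d := fun c d =>
    hfc.intervalIntegrable c d
  have hqeq : ∀ n, (∫ x in Set.Ioc a b, q n x) =
      (∫ x in b..(b + h n), f x) / h n - (∫ x in a..(a + h n), f x) / h n := by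
    intro n
    rw [← intervalIntegral.integral_of_le hab]
    have e1 : (∫ x in a..b, q n x) = ((∫ x in a..b, f (x + h n)) - ∫ x in a..b, f x) / h n := by
      rw [hq]
      simp only
      rw [intervalIntegral.integral_div]
      congr 1
      have hint2 : IntervalIntegrable (fun x => f (x + h n)) volume a b :=
        (hfc.comp (continuous_id.add continuous_const)).intervalIntegrable a b
      exact intervalIntegral.integral_sub hint2 (hint a b)
    rw [e1, intervalIntegral.integral_comp_add_right]
    have e2 : (∫ x in (a + h n)..(b + h n), f x) =
        (∫ x in (a + h n)..b, f x) + ∫ x in b..(b + h n), f x :=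
      (intervalIntegral.integral_add_adjacent_intervals (hint _ _) (hint _ _)).symm
    have e3 : (∫ x in a..b, f x) = (∫ x in a..(a + h n), f x) + ∫ x in (a + h n)..b, f x :=
      (intervalIntegral.integral_add_adjacent_intervals (hint _ _) (hint _ _)).symm
    rw [e2, e3]
    ring
  have hC : ∀ c : ℝ, Tendsto (fun n => (∫ x in c..(c + h n), f x) / h n) atTop (𝓝 (f c)) := by
    intro c
    have key : ∀ n, ‖(∫ x in c..(c + h n), f x) / h n - f c‖ ≤ (K : ℝ) * h n := by
      intro n
      have e : (∫ x in c..(c + h n), f x) / h n - f c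
          = (∫ x in c..(c + h n), f x - f c) / h n := by
        rw [intervalIntegral.integral_sub (hint _ _) (intervalIntegrable_const)]
        rw [intervalIntegral.integral_const]
        simp only [smul_eq_mul, add_sub_cancel_left]
        rw [sub_div, mul_div_cancel_left₀ _ (hpos n).ne']
      rw [e]
      have hb : ∀ x ∈ Set.uIoc c (c + h n), ‖f x - f c‖ ≤ (K : ℝ) * h n := by
        intro x hx
        rw [Set.uIoc_of_le (by linarith [hpos n])] at hx
        have := hf.dist_le_mul x c
        rw [Real.dist_eq, Real.dist_eq] at this
        have hxc : |x - c| ≤ h n := by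
          rw [abs_le]; constructor <;> linarith [hx.1.le, hx.2, (hpos n).le]
        calc ‖f x - f c‖ = |f x - f c| := rfl
          _ ≤ (K : ℝ) * |x - c| := this
          _ ≤ (K : ℝ) * h n := by
              exact mul_le_mul_of_nonneg_left hxc K.2
      have := intervalIntegral.norm_integral_le_of_norm_le_const (C := (K : ℝ) * h n) hb
      rw [norm_div, Real.norm_eq_abs (h n), abs_of_pos (hpos n), div_le_iff₀ (hpos n)]
      calc ‖∫ x in c..(c + h n), f x - f c‖ ≤ (K : ℝ) * h n * |c + h n - c| := this
        _ = (K : ℝ) * h n * h n := by rw [add_sub_cancel_left, abs_of_pos (hpos n)]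
    have h0 : Tendsto (fun n => (∫ x in c..(c + h n), f x) / h n - f c) atTop (𝓝 0) :=
      squeeze_zero_norm key (by have := hto.const_mul (K : ℝ); rw [mul_zero] at this; exact this)
    have := h0.add (tendsto_const_nhds (x := f c))
    simpa using this
  have hlim2 : Tendsto (fun n => ∫ x in Set.Ioc a b, q n x) atTop (𝓝 (f b - f a)) := by
    simp only [hqeq]
    exact (hC b).sub (hC a)
  rw [intervalIntegral.integral_of_le hab]
  exact tendsto_nhds_unique hDCT hlim2

local notation "⟪" x ", " y "⟫" => @inner ℝ _ _ x y

/-- deriv of a Lipschitz real function is bounded. -/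
lemma deriv_le_lip {C : NNReal} {f : ℝ → ℝ} (hf : LipschitzWith C f) (t : ℝ) :
    |deriv f t| ≤ C := by
  by_cases hd : DifferentiableAt ℝ f t
  · have h1 : ‖fderiv ℝ f t‖ ≤ C := hd.hasFDerivAt.le_of_lipschitz hf
    have h2 : (fderiv ℝ f t : ℝ → ℝ) 1 = deriv f t := fderiv_apply_one_eq_deriv
    calc |deriv f t| = ‖(fderiv ℝ f t : ℝ → ℝ) 1‖ := by rw [h2]; rfl
      _ ≤ ‖fderiv ℝ f t‖ * ‖(1 : ℝ)‖ := (fderiv ℝ f t).le_opNorm 1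
      _ ≤ (C : ℝ) * 1 := by
          apply mul_le_mul h1 (by simp) (by simp) C.coe_nonneg
      _ = C := mul_one _
  · rw [deriv_zero_of_not_differentiableAt hd]
    simpa using C.coe_nonneg

/-- product of bounded Lipschitz functions is Lipschitz. -/
lemma lipOn_mul {f g : ℝ → ℝ} {s : Set ℝ} {Kf Kg : NNReal} {Mf Mg : ℝ}
    (hf : LipschitzOnWith Kf f s) (hg : LipschitzOnWith Kg g s)
    (hMf : ∀ x ∈ s, |f x| ≤ Mf) (hMg : ∀ x ∈ s, |g x| ≤ Mg) :
    ∃ C : NNReal, LipschitzOnWith C (fun x => f x * g x) s := by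
  refine ⟨Real.toNNReal (Mf * Kg + Kf * Mg), ?_⟩
  rw [lipschitzOnWith_iff_dist_le_mul]
  intro x hx y hy
  have h1 : dist (f x * g x) (f y * g y) ≤ |f x| * dist (g x) (g y)
      + |g y| * dist (f x) (f y) := by
    rw [Real.dist_eq, Real.dist_eq, Real.dist_eq]
    calc |f x * g x - f y * g y| = |f x * (g x - g y) + g y * (f x - f y)| := by ring_nf
      _ ≤ |f x * (g x - g y)| + |g y * (f x - f y)| := abs_add_le _ _
      _ = |f x| * |g x - g y| + |g y| * |f x - f y| := by rw [abs_mul, abs_mul]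
  have h2 := hg.dist_le_mul x hx y hy
  have h3 := hf.dist_le_mul x hx y hy
  have hd : (0:ℝ) ≤ dist x y := dist_nonneg
  have hMf0 : 0 ≤ Mf := le_trans (abs_nonneg _) (hMf x hx)
  have hMg0 : 0 ≤ Mg := le_trans (abs_nonneg _) (hMg y hy)
  calc dist (f x * g x) (f y * g y)
      ≤ |f x| * dist (g x) (g y) + |g y| * dist (f x) (f y) := h1
    _ ≤ Mf * ((Kg : ℝ) * dist x y) + Mg * ((Kf : ℝ) * dist x y) := by
        gcongr <;> [exact hMf x hx; exact hMg y hy]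
    _ = (Mf * Kg + Kf * Mg) * dist x y := by ring
    _ ≤ (Real.toNNReal (Mf * Kg + Kf * Mg) : ℝ) * dist x y := by
        gcongr
        exact Real.le_coe_toNNReal _

lemma wirtinger_step {l : ℝ} (hl : 0 < l) {m : ℕ} {v : ℝ → EuclideanSpace ℝ (Fin m)}
    {K : NNReal} (hlip : LipschitzOnWith K v (Icc 0 l))
    (h0 : v 0 = 0) {ε : ℝ} (hε : 0 < ε) (hε2 : ε < l / 2) :
    (∫ t in (0:ℝ)..l, ‖deriv v t‖ ^ 2) ≥
      (Real.pi / l) * (‖v (l - ε)‖ ^ 2 * ctW (Real.pi / l) (l - ε)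
          - ‖v ε‖ ^ 2 * ctW (Real.pi / l) ε)
        + (Real.pi / l) ^ 2 * ∫ t in ε..(l - ε), ‖v t‖ ^ 2 := by
  have hπ := Real.pi_pos
  set c : ℝ := Real.pi / l with hc
  have hc0 : 0 < c := div_pos hπ hl
  have hε0 : (0:ℝ) < ε := hε
  have hεl : ε < l / 2 := hε2
  set a : ℝ := ε with ha
  set b : ℝ := l - ε with hb
  have hbl : b < l := by rw [hb]; linarith
  have ha0 : 0 < a := hε
  have hab : a ≤ b := by rw [ha, hb]; linarith
  have habl : Icc a b ⊆ Ioo 0 l := fun x hx => ⟨ha0.trans_le hx.1, hx.2.trans_lt hbl⟩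
  have hsub : Icc a b ⊆ Icc 0 l := habl.trans Ioo_subset_Icc_self
  have hsin : ∀ t ∈ Ioo (0:ℝ) l, 0 < Real.sin (c * t) := by
    intro t ht
    apply Real.sin_pos_of_pos_of_lt_pi (mul_pos hc0 ht.1)
    have : c * t < c * l := by nlinarith [ht.2]
    calc c * t < c * l := this
      _ = Real.pi := by rw [hc]; field_simp
  -- derivative of w
  have hw : ∀ t ∈ Ioo (0:ℝ) l, HasDerivAt (ctW c) (-(c * (1 + (ctW c t) ^ 2))) t := by
    intro t ht
    have hs := hsin t ht
    have hct : HasDerivAt (fun x : ℝ => c * x) c t := by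
      simpa using (hasDerivAt_id t).const_mul c
    have h1 : HasDerivAt (fun x => Real.cos (c * x)) (-Real.sin (c * t) * c) t :=
      (Real.hasDerivAt_cos (c * t)).comp t hct
    have h2 : HasDerivAt (fun x => Real.sin (c * x)) (Real.cos (c * t) * c) t :=
      (Real.hasDerivAt_sin (c * t)).comp t hct
    have h3 := h1.div h2 hs.ne'
    refine HasDerivAt.congr_deriv (f := ctW c) h3 ?_
    have hpyth := Real.sin_sq_add_cos_sq (c * t)
    have hone : 1 + (ctW c t) ^ 2 = 1 / (Real.sin (c * t)) ^ 2 := by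
      rw [ctW, div_pow]
      field_simp
      exact hpyth
    have hnum : -Real.sin (c * t) * c * Real.sin (c * t) - Real.cos (c * t) * (Real.cos (c * t) * c)
        = -c := by linear_combination (-c) * hpyth
    rw [hnum, hone]
    ring
  -- v is a.e. differentiable on the interior
  have hvd : ∀ᵐ t ∂(volume : Measure ℝ), t ∈ Ioo 0 l → DifferentiableAt ℝ v t := by
    filter_upwards [hlip.ae_differentiableWithinAt_of_mem (μ := volume)] with t h ht
    exact (h (Ioo_subset_Icc_self ht)).differentiableAt (Icc_mem_nhds ht.1 ht.2)
  -- deriv v is bounded by K on the interior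
  have hKd : ∀ t ∈ Ioo (0:ℝ) l, ‖deriv v t‖ ≤ K := by
    intro t ht
    by_cases hd : DifferentiableAt ℝ v t
    · have h1 : ‖fderiv ℝ v t‖ ≤ K :=
        hd.hasFDerivAt.le_of_lipschitzOn (Icc_mem_nhds ht.1 ht.2) hlip
      have h2 : (fderiv ℝ v t) 1 = deriv v t := fderiv_apply_one_eq_deriv
      calc ‖deriv v t‖ = ‖(fderiv ℝ v t) 1‖ := by rw [h2]
        _ ≤ ‖fderiv ℝ v t‖ * ‖(1:ℝ)‖ := (fderiv ℝ v t).le_opNorm 1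
        _ ≤ (K : ℝ) * 1 := by
            apply mul_le_mul h1 (by simp) (by simp) K.coe_nonneg
        _ = K := mul_one _
    · rw [deriv_zero_of_not_differentiableAt hd]
      simpa using K.coe_nonneg
  have hnel : ∀ᵐ t : ℝ ∂volume, t ≠ l := by
    have : {t : ℝ | ¬ t ≠ l} = {l} := by ext x; simp
    rw [ae_iff, this]; exact Real.volume_singleton
  -- integrability of ‖deriv v‖² on [0, l]
  have hI0l : IntervalIntegrable (fun t => ‖deriv v t‖ ^ 2) volume 0 l := by
    rw [intervalIntegrable_iff_integrableOn_Ioc_of_le hl.le]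
    apply Integrable.mono' (integrable_const ((K : ℝ) ^ 2))
    · exact (((measurable_deriv v).norm.pow_const 2)).aestronglyMeasurable
    · filter_upwards [ae_restrict_mem measurableSet_Ioc, ae_restrict_of_ae hnel] with t ht htl
      have ht' : t ∈ Ioo 0 l := ⟨ht.1, lt_of_le_of_ne ht.2 htl⟩
      have := hKd t ht'
      rw [Real.norm_eq_abs, abs_of_nonneg (sq_nonneg _)]
      nlinarith [norm_nonneg (deriv v t)]
  -- bound on v
  have hvb : ∀ t ∈ Icc (0:ℝ) l, ‖v t‖ ≤ K * l := by
    intro t ht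
    have := hlip.dist_le_mul t ht 0 (by constructor <;> [rfl; exact hl.le])
    rw [h0, dist_zero_right, Real.dist_eq, sub_zero] at this
    calc ‖v t‖ ≤ (K:ℝ) * |t| := this
      _ ≤ (K:ℝ) * l := by
          apply mul_le_mul_of_nonneg_left _ K.coe_nonneg
          rw [abs_of_nonneg ht.1]; exact ht.2
  -- g is Lipschitz on [0, l]
  set g : ℝ → ℝ := fun t => ‖v t‖ ^ 2 with hg
  have hglip : ∃ C : NNReal, LipschitzOnWith C g (Icc 0 l) := by
    refine ⟨Real.toNNReal (2 * K * l * K), ?_⟩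
    rw [lipschitzOnWith_iff_dist_le_mul]
    intro x hx y hy
    have h2 := hlip.dist_le_mul x hx y hy
    have hnx := hvb x hx
    have hny := hvb y hy
    rw [Real.dist_eq, hg]
    simp only
    have hvv : dist (v x) (v y) = ‖v x - v y‖ := dist_eq_norm _ _
    have key : |‖v x‖ ^ 2 - ‖v y‖ ^ 2| ≤ 2 * (K:ℝ) * l * ‖v x - v y‖ := by
      have h4 : |‖v x‖ - ‖v y‖| ≤ ‖v x - v y‖ := abs_norm_sub_norm_le _ _
      have h5 : |‖v x‖ ^ 2 - ‖v y‖ ^ 2| = |‖v x‖ + ‖v y‖| * |‖v x‖ - ‖v y‖| := by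
        rw [← abs_mul]; ring_nf
      rw [h5]
      have h6 : |‖v x‖ + ‖v y‖| ≤ 2 * (K:ℝ) * l := by
        rw [abs_of_nonneg (by positivity)]; linarith
      calc |‖v x‖ + ‖v y‖| * |‖v x‖ - ‖v y‖| ≤ (2 * (K:ℝ) * l) * ‖v x - v y‖ := by
            apply mul_le_mul h6 h4 (abs_nonneg _) (by positivity)
        _ = 2 * (K:ℝ) * l * ‖v x - v y‖ := rfl
    calc |‖v x‖ ^ 2 - ‖v y‖ ^ 2| ≤ 2 * (K:ℝ) * l * ‖v x - v y‖ := key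
      _ = 2 * (K:ℝ) * l * dist (v x) (v y) := by rw [hvv]
      _ ≤ 2 * (K:ℝ) * l * ((K:ℝ) * dist x y) := by
          apply mul_le_mul_of_nonneg_left h2 (by positivity)
      _ = (2 * (K:ℝ) * l * (K:ℝ)) * dist x y := by ring
      _ ≤ (Real.toNNReal (2 * K * l * K) : ℝ) * dist x y := by
          gcongr; exact Real.le_coe_toNNReal _
  obtain ⟨Cg, hCg⟩ := hglip
  -- bounds and Lipschitzness of w on [a, b]
  have hwcont : ContinuousOn (ctW c) (Icc a b) := by
    apply ContinuousOn.div
    · exact (Real.continuous_cos.comp (continuous_const.mul continuous_id)).continuousOn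
    · exact (Real.continuous_sin.comp (continuous_const.mul continuous_id)).continuousOn
    · intro x hx; exact (hsin x (habl hx)).ne'
  obtain ⟨Mw, hMw⟩ : ∃ Mw : ℝ, ∀ x ∈ Icc a b, ‖ctW c x‖ ≤ Mw :=
    isCompact_Icc.exists_bound_of_continuousOn hwcont
  have hMw0 : 0 ≤ Mw := le_trans (norm_nonneg _) (hMw a ⟨le_refl a, hab⟩)
  have hwlip : LipschitzOnWith (Real.toNNReal (c * (1 + Mw ^ 2))) (ctW c) (Icc a b) := by
    apply Convex.lipschitzOnWith_of_nnnorm_hasDerivWithin_le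
        (f' := fun t => -(c * (1 + (ctW c t) ^ 2))) (convex_Icc a b)
    · intro x hx
      exact ((hw x (habl hx)).hasDerivWithinAt)
    · intro x hx
      rw [← NNReal.coe_le_coe]
      have h1 : (‖-(c * (1 + ctW c x ^ 2))‖₊ : ℝ) = c * (1 + (ctW c x) ^ 2) := by
        rw [coe_nnnorm, norm_neg, Real.norm_eq_abs, abs_of_nonneg (by positivity)]
      rw [h1]
      have h2 := hMw x hx
      rw [Real.norm_eq_abs] at h2
      have h3 : (ctW c x) ^ 2 ≤ Mw ^ 2 := by nlinarith [abs_nonneg (ctW c x), sq_abs (ctW c x)]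
      calc c * (1 + ctW c x ^ 2) ≤ c * (1 + Mw ^ 2) := by nlinarith
        _ ≤ (Real.toNNReal (c * (1 + Mw ^ 2)) : ℝ) := Real.le_coe_toNNReal _
  -- G = g * w is Lipschitz on [a, b]; extend
  obtain ⟨CG, hCG⟩ : ∃ C : NNReal, LipschitzOnWith C (fun t => g t * ctW c t) (Icc a b) := by
    apply lipOn_mul (hCg.mono hsub) hwlip
    · intro x hx
      have := hvb x (hsub hx)
      rw [hg]
      simp only [abs_of_nonneg (sq_nonneg (‖v x‖))]
      exact pow_le_pow_left₀ (norm_nonneg _) this 2 |>.trans (le_refl _)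
    · intro x hx; rw [← Real.norm_eq_abs]; exact hMw x hx
  obtain ⟨G, hGlip, hGeq⟩ := hCG.extend_real
  -- FTC for G
  have hFTC : ∫ t in a..b, deriv G t = g b * ctW c b - g a * ctW c a := by
    rw [lip_ftc hGlip hab, ← hGeq ⟨le_refl a, hab⟩, ← hGeq ⟨hab, le_refl b⟩]
  -- integrabilities on [a, b]
  have hIab : IntervalIntegrable (fun t => ‖deriv v t‖ ^ 2) volume a b :=
    hI0l.mono_set (by rw [uIcc_of_le hab, uIcc_of_le hl.le]; exact hsub)
  have hIG : IntervalIntegrable (deriv G) volume a b := by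
    rw [intervalIntegrable_iff_integrableOn_Ioc_of_le hab]
    apply Integrable.mono' (integrable_const ((CG : ℝ)))
    · exact (measurable_deriv G).aestronglyMeasurable
    · exact ae_of_all _ fun t => deriv_le_lip hGlip t
  have hIg : IntervalIntegrable g volume a b := by
    apply ContinuousOn.intervalIntegrable
    rw [uIcc_of_le hab]
    exact ((hlip.continuousOn.mono hsub).norm.pow 2)
  -- a.e. pointwise identity
  have hneb : ∀ᵐ t : ℝ ∂volume, t ≠ b := by
    have : {t : ℝ | ¬ t ≠ b} = {b} := by ext x; simp
    rw [ae_iff, this]; exact Real.volume_singleton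
  have hae : ∀ᵐ t ∂(volume : Measure ℝ), t ∈ Set.uIoc a b →
      ‖deriv v t‖ ^ 2 - (c * deriv G t + c ^ 2 * g t)
        = ‖deriv v t - (c * ctW c t) • v t‖ ^ 2 := by
    rw [uIoc_of_le hab]
    filter_upwards [hvd, hneb] with t hdiff htb ht
    have htab : t ∈ Ioo a b := ⟨ht.1, lt_of_le_of_ne ht.2 htb⟩
    have htl' : t ∈ Ioo 0 l := habl (Ioo_subset_Icc_self htab)
    have hv : DifferentiableAt ℝ v t := hdiff htl'
    have hvda : HasDerivAt v (deriv v t) t := hv.hasDerivAt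
    have hgd : HasDerivAt g (2 * ⟪v t, deriv v t⟫) t := hvda.norm_sq
    have hwd := hw t htl'
    have hprod := hgd.mul hwd
    have hGd : HasDerivAt G
        (2 * ⟪v t, deriv v t⟫ * ctW c t + g t * (-(c * (1 + (ctW c t) ^ 2)))) t := by
      refine hprod.congr_of_eventuallyEq ?_
      filter_upwards [Icc_mem_nhds htab.1 htab.2] with y hy
      exact (hGeq hy).symm
    rw [hGd.deriv]
    rw [norm_sub_sq_real, real_inner_smul_right, real_inner_comm (deriv v t) (v t),
      norm_smul, mul_pow, Real.norm_eq_abs, sq_abs]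
    have hgt : g t = ‖v t‖ ^ 2 := rfl
    rw [hgt]
    ring
  -- integral identity on [a, b]
  have key : (∫ t in a..b, ‖deriv v t‖ ^ 2)
      - (c * (g b * ctW c b - g a * ctW c a) + c ^ 2 * ∫ t in a..b, g t)
      = ∫ t in a..b, ‖deriv v t - (c * ctW c t) • v t‖ ^ 2 := by
    rw [← hFTC, ← intervalIntegral.integral_const_mul, ← intervalIntegral.integral_const_mul,
      ← intervalIntegral.integral_add (hIG.const_mul c) (hIg.const_mul (c ^ 2)),
      ← intervalIntegral.integral_sub hIab ((hIG.const_mul c).add (hIg.const_mul (c ^ 2)))]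
    exact intervalIntegral.integral_congr_ae hae
  have hnonneg : 0 ≤ ∫ t in a..b, ‖deriv v t - (c * ctW c t) • v t‖ ^ 2 :=
    intervalIntegral.integral_nonneg hab (fun u _ => sq_nonneg _)
  have hmono : (∫ t in a..b, ‖deriv v t‖ ^ 2) ≤ ∫ t in (0:ℝ)..l, ‖deriv v t‖ ^ 2 :=
    intervalIntegral.integral_mono_interval ha0.le hab hbl.le
      (ae_of_all _ fun x => sq_nonneg _) hI0l
  have hga : g a = ‖v ε‖ ^ 2 := rfl
  have hgb : g b = ‖v (l - ε)‖ ^ 2 := rfl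
  have hgi : (∫ t in ε..(l - ε), ‖v t‖ ^ 2) = ∫ t in a..b, g t := rfl
  rw [ge_iff_le, hgi]
  rw [hga, hgb] at key
  linarith

/-- Wirtinger/Poincaré inequality: if `v : [0, l] → ℝ^m` is Lipschitz with
`v(0) = v(l) = 0`, then `∫_0^l |v'(t)|² dt ≥ (π/l)² ∫_0^l |v(t)|² dt`. -/
theorem stmt8 (l : ℝ) (hl : 0 < l) (m : ℕ) (v : ℝ → EuclideanSpace ℝ (Fin m))
    (K : NNReal) (hlip : LipschitzOnWith K v (Icc 0 l))
    (h0 : v 0 = 0) (h1 : v l = 0) :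
    (∫ t in (0:ℝ)..l, ‖deriv v t‖ ^ 2)
      ≥ (Real.pi / l) ^ 2 * ∫ t in (0:ℝ)..l, ‖v t‖ ^ 2 := by
  have hπ := Real.pi_pos
  set c : ℝ := Real.pi / l with hc
  have hc0 : 0 < c := div_pos hπ hl
  have hcl : c * l = Real.pi := by rw [hc]; field_simp
  set gf : ℝ → ℝ := fun t => ‖v t‖ ^ 2 with hgf
  set I : ℝ := ∫ t in (0:ℝ)..l, ‖deriv v t‖ ^ 2 with hI
  -- limit of ε * cot(c ε)
  have hεw : Tendsto (fun ε : ℝ => ε * ctW c ε) (𝓝[>] 0) (𝓝 (1 / c)) := by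
    have hsl : Tendsto (fun x : ℝ => Real.sin x / x) (𝓝[≠] (0:ℝ)) (𝓝 1) := by
      have hd := Real.hasDerivAt_sin 0
      rw [hasDerivAt_iff_tendsto_slope] at hd
      rw [Real.cos_zero] at hd
      refine hd.congr fun x => ?_
      rw [slope_def_field, Real.sin_zero, sub_zero, sub_zero]
    have hcε : Tendsto (fun ε : ℝ => c * ε) (𝓝[>] (0:ℝ)) (𝓝[≠] (0:ℝ)) := by
      apply tendsto_nhdsWithin_of_tendsto_nhds_of_eventually_within
      · have := ((continuous_const.mul continuous_id : Continuous fun x : ℝ => c * x)).tendsto 0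
        convert this.mono_left nhdsWithin_le_nhds using 2 <;> simp [hc]
      · filter_upwards [self_mem_nhdsWithin] with x hx
        have : (0:ℝ) < x := hx
        simp only [mem_compl_iff, mem_singleton_iff]
        positivity
    have hq : Tendsto (fun ε : ℝ => Real.sin (c * ε) / (c * ε)) (𝓝[>] (0:ℝ)) (𝓝 1) :=
      hsl.comp hcε
    have hqi : Tendsto (fun ε : ℝ => (Real.sin (c * ε) / (c * ε))⁻¹) (𝓝[>] (0:ℝ)) (𝓝 1) := by
      simpa using hq.inv₀ one_ne_zero
    have hcos : Tendsto (fun ε : ℝ => Real.cos (c * ε)) (𝓝[>] (0:ℝ)) (𝓝 1) := by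
      have : Tendsto (fun ε : ℝ => Real.cos (c * ε)) (𝓝 (0:ℝ)) (𝓝 (Real.cos (c * 0))) :=
        (Real.continuous_cos.comp (continuous_const.mul continuous_id)).tendsto 0
      rw [mul_zero, Real.cos_zero] at this
      exact this.mono_left nhdsWithin_le_nhds
    have hcomb := (hcos.mul (tendsto_const_nhds (x := 1 / c))).mul hqi
    rw [mul_one, one_mul] at hcomb
    refine Tendsto.congr (fun ε => ?_) (hcomb : Tendsto
      (fun ε : ℝ => Real.cos (c * ε) * (1 / c) * (Real.sin (c * ε) / (c * ε))⁻¹) _ (𝓝 (1 / c)))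
    rcases eq_or_ne (Real.sin (c * ε)) 0 with h | h
    · simp [ctW, h, inv_div]
    · rw [inv_div, ctW]
      field_simp
  -- generic boundary-term limit
  have hbt : ∀ F : ℝ → ℝ, (∀ ε ∈ Ioo (0:ℝ) (l/2), |F ε| ≤ (K:ℝ)^2 * ε^2) →
      Tendsto (fun ε : ℝ => F ε * ctW c ε) (𝓝[>] 0) (𝓝 0) := by
    intro F hF
    have hdiv : Tendsto (fun ε : ℝ => F ε / ε) (𝓝[>] 0) (𝓝 0) := by
      apply squeeze_zero_norm' (a := fun ε => (K:ℝ)^2 * ε)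
      · filter_upwards [Ioo_mem_nhdsGT_of_mem ⟨le_refl (0:ℝ), half_pos hl⟩] with ε hε
        rw [Real.norm_eq_abs, abs_div, abs_of_pos hε.1, div_le_iff₀ hε.1]
        calc |F ε| ≤ (K:ℝ)^2 * ε^2 := hF ε hε
          _ = (K:ℝ)^2 * ε * ε := by ring
      · have := ((continuous_const.mul continuous_id :
            Continuous fun x : ℝ => (K:ℝ)^2 * x)).tendsto 0
        convert this.mono_left nhdsWithin_le_nhds using 2 <;> simp
    have := hdiv.mul hεw
    rw [zero_mul] at this
    refine this.congr' ?_
    filter_upwards [self_mem_nhdsWithin] with ε hε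
    have hε0 : (ε:ℝ) ≠ 0 := ne_of_gt hε
    field_simp
  -- the two boundary terms
  have hb1 : ∀ ε ∈ Ioo (0:ℝ) (l/2), |‖v ε‖^2| ≤ (K:ℝ)^2 * ε^2 := by
    intro ε hε
    have hmem : ε ∈ Icc (0:ℝ) l := ⟨hε.1.le, by linarith [hε.2]⟩
    have := hlip.dist_le_mul ε hmem 0 ⟨le_refl 0, hl.le⟩
    rw [h0, dist_zero_right, Real.dist_eq, sub_zero, abs_of_pos hε.1] at this
    rw [abs_of_nonneg (sq_nonneg _)]
    nlinarith [norm_nonneg (v ε)]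
  have hb2 : ∀ ε ∈ Ioo (0:ℝ) (l/2), |(-‖v (l-ε)‖^2 : ℝ)| ≤ (K:ℝ)^2 * ε^2 := by
    intro ε hε
    have hmem : l - ε ∈ Icc (0:ℝ) l := ⟨by linarith [hε.2], by linarith [hε.1]⟩
    have := hlip.dist_le_mul (l - ε) hmem l ⟨hl.le, le_refl l⟩
    rw [h1, dist_zero_right, Real.dist_eq] at this
    have habs : |l - ε - l| = ε := by rw [show l - ε - l = -ε by ring, abs_neg, abs_of_pos hε.1]
    rw [habs] at this
    rw [abs_neg, abs_of_nonneg (sq_nonneg _)]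
    nlinarith [norm_nonneg (v (l - ε))]
  have hwsymm : ∀ ε : ℝ, ctW c (l - ε) = - ctW c ε := by
    intro ε
    have : c * (l - ε) = Real.pi - c * ε := by rw [mul_sub, hcl]
    rw [ctW, ctW, this, Real.cos_pi_sub, Real.sin_pi_sub, neg_div]
  have hbdry : Tendsto (fun ε : ℝ =>
      c * (‖v (l-ε)‖^2 * ctW c (l-ε) - ‖v ε‖^2 * ctW c ε)) (𝓝[>] 0) (𝓝 0) := by
    have h2 := hbt _ hb2
    have h1' := hbt _ hb1
    have := (h2.sub h1').const_mul c
    rw [sub_zero, mul_zero] at this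
    refine this.congr fun ε => ?_
    rw [hwsymm ε]
    ring
  -- integral limit
  have hgc : ContinuousOn gf (Icc 0 l) := (hlip.continuousOn.norm.pow 2)
  have hgint : ∀ p q : ℝ, p ∈ Icc (0:ℝ) l → q ∈ Icc (0:ℝ) l →
      IntervalIntegrable gf volume p q := by
    intro p q hp hq
    apply ContinuousOn.intervalIntegrable
    exact hgc.mono (uIcc_subset_Icc hp hq)
  have hM : ∀ x ∈ Icc (0:ℝ) l, ‖gf x‖ ≤ ((K:ℝ) * l)^2 := by
    intro x hx
    have := hlip.dist_le_mul x hx 0 ⟨le_refl 0, hl.le⟩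
    rw [h0, dist_zero_right, Real.dist_eq, sub_zero] at this
    have h2 : ‖v x‖ ≤ (K:ℝ) * l := by
      calc ‖v x‖ ≤ (K:ℝ) * |x| := this
        _ ≤ (K:ℝ) * l := by
            apply mul_le_mul_of_nonneg_left _ K.coe_nonneg
            rw [abs_of_nonneg hx.1]; exact hx.2
    show |‖v x‖ ^ 2| ≤ ((K:ℝ) * l) ^ 2
    rw [abs_of_nonneg (sq_nonneg ‖v x‖)]
    nlinarith [norm_nonneg (v x)]
  have hsmall1 : Tendsto (fun ε : ℝ => ∫ t in (0:ℝ)..ε, gf t) (𝓝[>] 0) (𝓝 0) := by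
    apply squeeze_zero_norm' (a := fun ε => ((K:ℝ)*l)^2 * ε)
    · filter_upwards [Ioo_mem_nhdsGT_of_mem ⟨le_refl (0:ℝ), half_pos hl⟩] with ε hε
      have := intervalIntegral.norm_integral_le_of_norm_le_const (C := ((K:ℝ)*l)^2)
        (a := (0:ℝ)) (b := ε) (f := gf) (fun x hx => by
          rw [uIoc_of_le hε.1.le] at hx
          exact hM x ⟨hx.1.le, by linarith [hx.2, hε.2]⟩)
      calc ‖∫ t in (0:ℝ)..ε, gf t‖ ≤ ((K:ℝ)*l)^2 * |ε - 0| := this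
        _ = ((K:ℝ)*l)^2 * ε := by rw [sub_zero, abs_of_pos hε.1]
    · have := ((continuous_const.mul continuous_id :
          Continuous fun x : ℝ => ((K:ℝ)*l)^2 * x)).tendsto 0
      convert this.mono_left nhdsWithin_le_nhds using 2 <;> simp
  have hsmall2 : Tendsto (fun ε : ℝ => ∫ t in (l-ε)..l, gf t) (𝓝[>] 0) (𝓝 0) := by
    apply squeeze_zero_norm' (a := fun ε => ((K:ℝ)*l)^2 * ε)
    · filter_upwards [Ioo_mem_nhdsGT_of_mem ⟨le_refl (0:ℝ), half_pos hl⟩] with ε hε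
      have := intervalIntegral.norm_integral_le_of_norm_le_const (C := ((K:ℝ)*l)^2)
        (a := l - ε) (b := l) (f := gf) (fun x hx => by
          rw [uIoc_of_le (by linarith [hε.1] : l - ε ≤ l)] at hx
          exact hM x ⟨by linarith [hx.1, hε.2], hx.2⟩)
      calc ‖∫ t in (l-ε)..l, gf t‖ ≤ ((K:ℝ)*l)^2 * |l - (l - ε)| := this
        _ = ((K:ℝ)*l)^2 * ε := by rw [show l - (l - ε) = ε by ring, abs_of_pos hε.1]
    · have := ((continuous_const.mul continuous_id :
          Continuous fun x : ℝ => ((K:ℝ)*l)^2 * x)).tendsto 0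
      convert this.mono_left nhdsWithin_le_nhds using 2 <;> simp
  have hsplit : ∀ ε ∈ Ioo (0:ℝ) (l/2),
      (∫ t in ε..(l-ε), gf t) = (∫ t in (0:ℝ)..l, gf t)
        - (∫ t in (0:ℝ)..ε, gf t) - ∫ t in (l-ε)..l, gf t := by
    intro ε hε
    have hm1 : ε ∈ Icc (0:ℝ) l := ⟨hε.1.le, by linarith [hε.2]⟩
    have hm2 : l - ε ∈ Icc (0:ℝ) l := ⟨by linarith [hε.2], by linarith [hε.1]⟩
    have e1 : (∫ t in (0:ℝ)..ε, gf t) + (∫ t in ε..(l-ε), gf t) = ∫ t in (0:ℝ)..(l-ε), gf t :=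
      intervalIntegral.integral_add_adjacent_intervals
        (hgint 0 ε ⟨le_refl 0, hl.le⟩ hm1) (hgint ε (l-ε) hm1 hm2)
    have e2 : (∫ t in (0:ℝ)..(l-ε), gf t) + (∫ t in (l-ε)..l, gf t) = ∫ t in (0:ℝ)..l, gf t :=
      intervalIntegral.integral_add_adjacent_intervals
        (hgint 0 (l-ε) ⟨le_refl 0, hl.le⟩ hm2) (hgint (l-ε) l hm2 ⟨hl.le, le_refl l⟩)
    linarith
  have hIlim : Tendsto (fun ε : ℝ => ∫ t in ε..(l-ε), gf t) (𝓝[>] 0)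
      (𝓝 (∫ t in (0:ℝ)..l, gf t)) := by
    have := (tendsto_const_nhds (x := ∫ t in (0:ℝ)..l, gf t)
        (f := 𝓝[>] (0:ℝ))).sub hsmall1 |>.sub hsmall2
    rw [sub_zero, sub_zero] at this
    refine this.congr' ?_
    filter_upwards [Ioo_mem_nhdsGT_of_mem ⟨le_refl (0:ℝ), half_pos hl⟩] with ε hε
    exact (hsplit ε hε).symm
  -- combine
  have hφ : Tendsto (fun ε : ℝ =>
      c * (‖v (l-ε)‖^2 * ctW c (l-ε) - ‖v ε‖^2 * ctW c ε)
        + c^2 * ∫ t in ε..(l-ε), gf t) (𝓝[>] 0)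
      (𝓝 (c^2 * ∫ t in (0:ℝ)..l, gf t)) := by
    have := hbdry.add (hIlim.const_mul (c^2))
    rw [zero_add] at this
    exact this
  have hev : ∀ᶠ ε in 𝓝[>] (0:ℝ),
      c * (‖v (l-ε)‖^2 * ctW c (l-ε) - ‖v ε‖^2 * ctW c ε)
        + c^2 * (∫ t in ε..(l-ε), gf t) ≤ I := by
    filter_upwards [Ioo_mem_nhdsGT_of_mem ⟨le_refl (0:ℝ), half_pos hl⟩] with ε hε
    exact wirtinger_step hl hlip h0 hε.1 hε.2
  exact le_of_tendsto hφ hev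
end

section
/- Let T > 0 and let v : [0, T] → ℝ^{n−2} be Lipschitz with |v(t)| ≤ 1/2 for all t. Set w(t) = (1 − |v(t)|²)^{1/2} and z(t) = (cos t · w(t), sin t · w(t), v(t)). Then for almost every t one has |z'(t)| ≤ 1 + |v'(t)|², and consequently the length of the curve z satisfies ∫_0^T |z'(t)| dt ≤ T + ∫_0^T |v'(t)|² dt. -/
set_option maxHeartbeats 1000000


open MeasureTheory Set

/-- let `v : [0,T] → ℝ^{n−2}` be Lipschitz with `|v| ≤ 1/2`, let
`w = (1 − |v|²)^{1/2}` and `z(t) = (cos t · w(t), sin t · w(t), v(t))` (in coordinates of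
`EuclideanSpace ℝ (Fin n)`, with `v` supported on coordinates `i ≥ 2`). Then for almost
every `t ∈ (0,T)` one has `|z'(t)| ≤ 1 + |v'(t)|²`, and consequently
`∫_0^T |z'(t)| dt ≤ T + ∫_0^T |v'(t)|² dt`. -/
theorem stmt12 (n : ℕ) (hn : 2 ≤ n) (T : ℝ) (hT : 0 < T)
    (v : ℝ → EuclideanSpace ℝ (Fin n)) (K : NNReal)
    (hlip : LipschitzOnWith K v (Icc 0 T))
    (hsmall : ∀ t ∈ Icc (0:ℝ) T, ‖v t‖ ≤ 1 / 2)
    (hv0 : ∀ s : ℝ, ∀ i : Fin n, (i : ℕ) < 2 → v s i = 0)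
    (w : ℝ → ℝ) (hw : ∀ s, w s = Real.sqrt (1 - ‖v s‖ ^ 2))
    (z : ℝ → EuclideanSpace ℝ (Fin n))
    (hz : ∀ s : ℝ, z s = fun i : Fin n =>
      if (i : ℕ) = 0 then Real.cos s * w s
      else if (i : ℕ) = 1 then Real.sin s * w s
      else v s i) :
    (∀ᵐ t ∂volume, t ∈ Ioo 0 T → ‖deriv z t‖ ≤ 1 + ‖deriv v t‖ ^ 2) ∧
    (∫ t in (0:ℝ)..T, ‖deriv z t‖) ≤ T + ∫ t in (0:ℝ)..T, ‖deriv v t‖ ^ 2 := by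
  have key : ∀ t ∈ Ioo (0:ℝ) T, DifferentiableAt ℝ v t →
      ‖deriv z t‖ ≤ 1 + ‖deriv v t‖ ^ 2 ∧ ‖deriv v t‖ ≤ K := by
    intro t ht hD
    set v' := deriv v t with hv'def
    have hder : HasDerivAt v v' t := hD.hasDerivAt
    have hnhds : Icc (0:ℝ) T ∈ nhds t := Icc_mem_nhds ht.1 ht.2
    have hK : ‖v'‖ ≤ K := hder.le_of_lipschitzOn hnhds hlip
    have hsm : ‖v t‖ ≤ 1 / 2 := hsmall t (Ioo_subset_Icc_self ht)
    have hpos : (3:ℝ)/4 ≤ 1 - ‖v t‖ ^ 2 := by nlinarith [norm_nonneg (v t)]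
    -- derivative of 1 - ‖v s‖^2
    set a : ℝ := inner ℝ (v t) v' with ha
    have hQ : HasDerivAt (fun s => 1 - ‖v s‖ ^ 2) (-(2 * a)) t := by
      have h1 : HasDerivAt (fun s => (inner ℝ (v s) (v s) : ℝ))
          ((inner ℝ (v t) v' : ℝ) + (inner ℝ v' (v t) : ℝ)) t := hder.inner ℝ hder
      have h2 : (fun s => 1 - ‖v s‖ ^ 2) = fun s => 1 - (inner ℝ (v s) (v s) : ℝ) := by
        funext s; rw [real_inner_self_eq_norm_sq]
      rw [h2]
      have := (hasDerivAt_const t (1:ℝ)).sub h1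
      refine this.congr_deriv ?_
      rw [ha, real_inner_comm (v t) v']; ring
    have hwt : w t = Real.sqrt (1 - ‖v t‖ ^ 2) := hw t
    have hne : 1 - ‖v t‖ ^ 2 ≠ 0 := by linarith
    set w' : ℝ := -(2 * a) / (2 * Real.sqrt (1 - ‖v t‖ ^ 2)) with hw'def
    have hw' : HasDerivAt w w' t := by
      have hwfun : w = fun s => Real.sqrt (1 - ‖v s‖ ^ 2) := funext hw
      rw [hwfun]; exact hQ.sqrt hne
    have hwt2 : w t ^ 2 = 1 - ‖v t‖ ^ 2 := by
      rw [hwt]; exact Real.sq_sqrt (by linarith)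
    have hwtpos : 0 < w t := by
      rw [hwt]; exact Real.sqrt_pos.2 (by linarith)
    have hw'eq : w' = -a / w t := by
      rw [hw'def, hwt]; ring
    have hab : |a| ≤ ‖v t‖ * ‖v'‖ := abs_real_inner_le_norm (v t) v'
    have ha2 : a ^ 2 ≤ (1/4) * ‖v'‖ ^ 2 := by
      have h1 : a^2 ≤ (‖v t‖ * ‖v'‖)^2 := by
        rw [← sq_abs a]; exact pow_le_pow_left₀ (abs_nonneg a) hab 2
      nlinarith [norm_nonneg v', norm_nonneg (v t)]
    have hw'2 : w' ^ 2 ≤ ‖v'‖ ^ 2 := by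
      rw [hw'eq, div_pow, div_le_iff₀ (by positivity)]
      nlinarith [norm_nonneg v']
    -- coordinate setup
    set i0 : Fin n := ⟨0, by omega⟩ with hi0
    set i1 : Fin n := ⟨1, by omega⟩ with hi1
    set d : Fin n → ℝ := fun i =>
      if (i:ℕ) = 0 then -Real.sin t * w t + Real.cos t * w'
      else if (i:ℕ) = 1 then Real.cos t * w t + Real.sin t * w'
      else v' i with hd
    have hvz : ∀ i : Fin n, HasDerivAt (fun s => v s i) (v' i) t := by
      intro i
      have := (EuclideanSpace.proj i).hasFDerivAt.comp_hasDerivAt t hder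
      exact this
    have hv'0 : ∀ i : Fin n, (i:ℕ) < 2 → v' i = 0 := by
      intro i hi
      have h1 : HasDerivAt (fun s => v s i) (v' i) t := hvz i
      have h2 : (fun s => v s i) = fun _ => (0:ℝ) := funext fun s => hv0 s i hi
      rw [h2] at h1
      exact h1.unique (hasDerivAt_const t 0)
    have hZ : ∀ i : Fin n, HasDerivAt (fun s => z s i) (d i) t := by
      intro i
      have hzi : (fun s => z s i) = fun s =>
          if (i:ℕ) = 0 then Real.cos s * w s
          else if (i:ℕ) = 1 then Real.sin s * w s
          else v s i := by funext s; rw [hz s]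
      by_cases h0 : (i:ℕ) = 0
      · have he : (fun s => z s i) = fun s => Real.cos s * w s := by
          rw [hzi]; simp [h0]
        rw [he, hd]; simp only [h0, if_pos]
        exact (Real.hasDerivAt_cos t).mul hw'
      · by_cases h1 : (i:ℕ) = 1
        · have he : (fun s => z s i) = fun s => Real.sin s * w s := by
            rw [hzi]; simp [h0, h1]
          rw [he, hd]; simp only [h0, h1, if_neg, if_pos, ite_false, ite_true]
          exact (Real.hasDerivAt_sin t).mul hw'
        · have he : (fun s => z s i) = fun s => v s i := by
            rw [hzi]; simp [h0, h1]
          rw [he, hd]; simp only [h0, h1, ite_false]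
          exact hvz i
    -- assemble derivative of z
    set D : EuclideanSpace ℝ (Fin n) := (EuclideanSpace.equiv (Fin n) ℝ).symm d with hD2
    have hzt : HasDerivAt z D t := by
      have hpi : HasDerivAt (fun s => (EuclideanSpace.equiv (Fin n) ℝ) (z s)) d t :=
        hasDerivAt_pi.2 (fun i => hZ i)
      have := ((EuclideanSpace.equiv (Fin n) ℝ).symm : (Fin n → ℝ) →L[ℝ]
          EuclideanSpace ℝ (Fin n)).hasFDerivAt.comp_hasDerivAt t hpi
      exact this
    have hderivz : deriv z t = D := hzt.deriv
    -- norm computation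
    have hnorm2 : ‖D‖ ^ 2 = ∑ i, d i ^ 2 := by
      rw [EuclideanSpace.norm_eq, Real.sq_sqrt (by positivity)]
      refine Finset.sum_congr rfl fun i _ => ?_
      have : D i = d i := rfl
      rw [this, Real.norm_eq_abs, sq_abs]
    have hne01 : i0 ≠ i1 := by
      rw [hi0, hi1]; intro h; exact absurd (congrArg Fin.val h) (by norm_num)
    set A : ℝ := -Real.sin t * w t + Real.cos t * w' with hA
    set B : ℝ := Real.cos t * w t + Real.sin t * w' with hB
    have hpoint : ∀ i : Fin n, d i ^ 2 = v' i ^ 2 +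
        ((if i = i0 then A ^ 2 else 0) + (if i = i1 then B ^ 2 else 0)) := by
      intro i
      by_cases h0 : (i:ℕ) = 0
      · have hii : i = i0 := Fin.ext h0
        subst hii
        have h01 : (i0 : ℕ) ≠ 1 := by rw [hi0]; norm_num
        rw [hd, hv'0 i0 (by rw [hi0]; norm_num)]
        simp [h0, hne01, hA]
      · by_cases h1 : (i:ℕ) = 1
        · have hii : i = i1 := Fin.ext h1
          subst hii
          rw [hd, hv'0 i1 (by rw [hi1]; norm_num)]
          simp [h0, h1, hne01.symm, hB]
        · have hni0 : i ≠ i0 := fun h => h0 (congrArg Fin.val h)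
          have hni1 : i ≠ i1 := fun h => h1 (congrArg Fin.val h)
          rw [hd]; simp [h0, h1, hni0, hni1]
    have hsum : ∑ i, d i ^ 2 = (∑ i, v' i ^ 2) + (A ^ 2 + B ^ 2) := by
      rw [Finset.sum_congr rfl fun i _ => hpoint i, Finset.sum_add_distrib,
        Finset.sum_add_distrib]
      simp [Finset.sum_ite_eq']
    have hnv' : ‖v'‖ ^ 2 = ∑ i, v' i ^ 2 := by
      rw [EuclideanSpace.norm_eq, Real.sq_sqrt (by positivity)]
      refine Finset.sum_congr rfl fun i _ => ?_
      rw [Real.norm_eq_abs, sq_abs]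
    have htrig : A ^ 2 + B ^ 2 = w t ^ 2 + w' ^ 2 := by
      rw [hA, hB]
      linear_combination (w t ^ 2 + w' ^ 2) * Real.sin_sq_add_cos_sq t
    have hz2 : ‖deriv z t‖ ^ 2 ≤ (1 + ‖v'‖ ^ 2) ^ 2 := by
      rw [hderivz, hnorm2, hsum, htrig, ← hnv']
      have e1 : ‖v t‖ ^ 2 ≥ 0 := sq_nonneg _
      have e2 : (0:ℝ) ≤ ‖v'‖ ^ 2 := sq_nonneg _
      nlinarith [hw'2, hwt2]
    refine ⟨?_, hK⟩
    have e3 : (0:ℝ) ≤ ‖deriv z t‖ := norm_nonneg _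
    have e4 : (0:ℝ) ≤ 1 + ‖v'‖ ^ 2 := by positivity
    nlinarith [hz2]
  have hdiff : ∀ᵐ t ∂volume, t ∈ Ioo 0 T → DifferentiableAt ℝ v t := by
    filter_upwards [hlip.ae_differentiableWithinAt_of_mem] with t h ht
    exact (h (Ioo_subset_Icc_self ht)).differentiableAt (Icc_mem_nhds ht.1 ht.2)
  have main_ae : ∀ᵐ t ∂volume, t ∈ Ioo 0 T →
      (‖deriv z t‖ ≤ 1 + ‖deriv v t‖ ^ 2 ∧ ‖deriv v t‖ ≤ K) := by
    filter_upwards [hdiff] with t h ht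
    exact key t ht (h ht)
  refine ⟨main_ae.mono fun t h ht => (h ht).1, ?_⟩
  have hTne : ∀ᵐ t : ℝ ∂volume, t ≠ T := by
    rw [ae_iff]; simp only [ne_eq, not_not, setOf_eq_eq_singleton]
    exact measure_singleton T
  have hres : ∀ᵐ t ∂(volume.restrict (Ioc 0 T)),
      ‖deriv z t‖ ≤ 1 + ‖deriv v t‖ ^ 2 ∧ ‖deriv v t‖ ≤ K := by
    filter_upwards [ae_restrict_mem measurableSet_Ioc, ae_restrict_of_ae main_ae,
      ae_restrict_of_ae hTne] with t htm h hne
    exact h ⟨htm.1, lt_of_le_of_ne htm.2 hne⟩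
  have mz : AEStronglyMeasurable (fun t => ‖deriv z t‖) volume :=
    (measurable_deriv z).norm.aestronglyMeasurable
  have mv : AEStronglyMeasurable (fun t => ‖deriv v t‖ ^ 2) volume :=
    ((measurable_deriv v).norm.pow_const 2).aestronglyMeasurable
  have hfin : volume (Ioc (0:ℝ) T) ≠ ⊤ := by
    rw [Real.volume_Ioc]; exact ENNReal.ofReal_ne_top
  have hint1 : IntegrableOn (fun t => ‖deriv z t‖) (Ioc 0 T) volume := by
    apply Measure.integrableOn_of_bounded (M := 1 + (K:ℝ)^2) hfin mz
    filter_upwards [hres] with t h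
    rw [Real.norm_eq_abs, abs_of_nonneg (norm_nonneg _)]
    nlinarith [h.1, h.2, norm_nonneg (deriv v t), K.coe_nonneg]
  have hint2 : IntegrableOn (fun t => ‖deriv v t‖ ^ 2) (Ioc 0 T) volume := by
    apply Measure.integrableOn_of_bounded (M := (K:ℝ)^2) hfin mv
    filter_upwards [hres] with t h
    rw [Real.norm_eq_abs, abs_of_nonneg (by positivity)]
    nlinarith [h.2, norm_nonneg (deriv v t), K.coe_nonneg]
  have hintc : IntegrableOn (fun _ : ℝ => (1:ℝ)) (Ioc 0 T) volume :=
    integrableOn_const hfin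
  have hint3 : IntegrableOn (fun t => 1 + ‖deriv v t‖ ^ 2) (Ioc 0 T) volume :=
    hintc.add hint2
  rw [intervalIntegral.integral_of_le hT.le, intervalIntegral.integral_of_le hT.le]
  have hmono : ∫ t in Ioc (0:ℝ) T, ‖deriv z t‖ ≤
      ∫ t in Ioc (0:ℝ) T, (1 + ‖deriv v t‖ ^ 2) :=
    integral_mono_ae hint1 hint3 (hres.mono fun t h => h.1)
  have hsplit : ∫ t in Ioc (0:ℝ) T, (1 + ‖deriv v t‖ ^ 2) =
      T + ∫ t in Ioc (0:ℝ) T, ‖deriv v t‖ ^ 2 := by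
    rw [integral_add hintc hint2]
    congr 1
    rw [setIntegral_const, measureReal_def, Real.volume_Ioc, smul_eq_mul, mul_one,
      ENNReal.toReal_ofReal (by linarith)]
    ring
  linarith
end
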